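/- arXiv:1508.00041 — 8 statements merged into one kernel-verified Lean document; each statement's English description precedes it below -/
import Mathlib

section
/- Let D be a division ring and m, n positive integers. For every left submodule I of M_{m×n}(D) (an additive subgroup with M_m(D)·I ⊆ I) there exists a unique left row reduced echelon matrix R ∈ M_n(D) such that I = M_{m×n}(D)·R := {X·R : X ∈ M_{m×n}(D)}. -/
open Matrix Pointwise

/-- The left row space of a matrix: the span of its rows in the left `D`-module of
row vectors `Fin n → D`. -/
def LRS {D : Type*} [DivisionRing D] {ι : Type*} {n : ℕ} (A : Matrix ι (Fin n) D) :
    Submodule D (Fin n → D) :=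
  Submodule.span D (Set.range A)

/-- The right column space of a matrix: the span of its columns in the right `D`-module
(i.e. `Dᵐᵒᵖ`-module) of column vectors `Fin m → D`. -/
def RCS {D : Type*} [DivisionRing D] {ι : Type*} {m : ℕ} (A : Matrix (Fin m) ι D) :
    Submodule Dᵐᵒᵖ (Fin m → D) :=
  Submodule.span Dᵐᵒᵖ (Set.range Aᵀ)

/-- `R` is a left row reduced echelon matrix: for some `t ≤ m`, the rows with (0-based)
index `≥ t` are zero, each of the first `t` rows has first nonzero entry `1`, located in
column `k i`, the `k i` are strictly increasing, and column `k i` is zero outside row `i`. -/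
def IsRowReducedEchelon {D : Type*} [DivisionRing D] {m n : ℕ}
    (R : Matrix (Fin m) (Fin n) D) : Prop :=
  ∃ (t : ℕ) (ht : t ≤ m) (k : Fin t → Fin n),
    StrictMono k ∧
    (∀ i : Fin m, t ≤ (i : ℕ) → R i = 0) ∧
    (∀ i : Fin t, R (Fin.castLE ht i) (k i) = 1) ∧
    (∀ (i : Fin t) (j : Fin n), (j : ℕ) < (k i : ℕ) → R (Fin.castLE ht i) j = 0) ∧
    (∀ (i : Fin t) (p : Fin m), (p : ℕ) ≠ (i : ℕ) → R p (k i) = 0)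

/-- `C` is a right column reduced echelon matrix: its transpose is left row reduced
echelon (columns of `C` beyond the first `t` are zero, each of the first `t` columns has
first-from-the-top nonzero entry `1` located in row `k j`, the `k j` strictly increase,
and row `k j` is zero outside column `j`). -/
def IsColReducedEchelon {D : Type*} [DivisionRing D] {m n : ℕ}
    (C : Matrix (Fin m) (Fin n) D) : Prop :=
  IsRowReducedEchelon Cᵀ

/-- `A` is upper triangular: the `(i,j)` entry vanishes whenever `i > j`. -/
def IsUpperTriangular {D : Type*} [Zero D] {m n : ℕ} (A : Matrix (Fin m) (Fin n) D) : Prop :=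
  ∀ (i : Fin m) (j : Fin n), (j : ℕ) < (i : ℕ) → A i j = 0

/-- The index at which block `i` of the partition `M` starts. -/
def blockStart {r : ℕ} (M : Fin r → ℕ) (i : Fin r) : ℕ :=
  ∑ t ∈ Finset.Iio i, M t

theorem blockStart_add_lt {r : ℕ} (M : Fin r → ℕ) (i : Fin r) (a : Fin (M i)) :
    blockStart M i + (a : ℕ) < ∑ t, M t := by
  have h2 : (a : ℕ) < M i := a.2
  have h1 : blockStart M i + M i ≤ ∑ t, M t := by
    have hins : i ∉ Finset.Iio i := by simp
    calc blockStart M i + M i = ∑ t ∈ insert i (Finset.Iio i), M t := by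
          rw [Finset.sum_insert hins, blockStart, add_comm]
      _ ≤ ∑ t, M t := Finset.sum_le_sum_of_subset (Finset.subset_univ _)
  omega

/-- The global (row or column) index of the `a`-th entry of the `i`-th block of the
partition `M`. -/
def blockIdx {r : ℕ} (M : Fin r → ℕ) (i : Fin r) (a : Fin (M i)) : Fin (∑ t, M t) :=
  ⟨blockStart M i + (a : ℕ), blockStart_add_lt M i a⟩

/-- Membership in the nest module `T_{(M,N)}(D)`: the `(i,j)` block vanishes whenever
`i > j`. -/
def IsNest {D : Type*} [Zero D] {r s : ℕ} (M : Fin r → ℕ) (N : Fin s → ℕ)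
    (A : Matrix (Fin (∑ t, M t)) (Fin (∑ t, N t)) D) : Prop :=
  ∀ (i : Fin r) (j : Fin s) (a : Fin (M i)) (b : Fin (N j)),
    (j : ℕ) < (i : ℕ) → A (blockIdx M i a) (blockIdx N j b) = 0

/-- The `i`-th block row of a matrix whose rows are partitioned according to `M`. -/
def blockRow {D : Type*} {r n : ℕ} (M : Fin r → ℕ)
    (A : Matrix (Fin (∑ t, M t)) (Fin n) D) (i : Fin r) :
    Matrix (Fin (M i)) (Fin n) D :=
  fun a q => A (blockIdx M i a) q

/-- The `j`-th block column of a matrix whose columns are partitioned according to `N`. -/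
def blockCol {D : Type*} {s m : ℕ} (N : Fin s → ℕ)
    (A : Matrix (Fin m) (Fin (∑ t, N t)) D) (j : Fin s) :
    Matrix (Fin m) (Fin (N j)) D :=
  fun p b => A p (blockIdx N j b)

section Aux
variable {D : Type*} [DivisionRing D] {n : ℕ}

open Classical in
noncomputable def pivotSet (V : Submodule D (Fin n → D)) : Finset (Fin n) :=
  Finset.univ.filter fun k => ∃ v ∈ V, v k ≠ 0 ∧ ∀ j < k, v j = 0

lemma mem_pivotSet {V : Submodule D (Fin n → D)} {k : Fin n} :
    k ∈ pivotSet V ↔ ∃ v ∈ V, v k ≠ 0 ∧ ∀ j < k, v j = 0 := by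
  classical simp [pivotSet]

lemma eq_zero_of_forall_pivot {V : Submodule D (Fin n → D)} {v : Fin n → D}
    (hv : v ∈ V) (h : ∀ k ∈ pivotSet V, v k = 0) : v = 0 := by
  classical
  by_contra hne
  have hex : ∃ j, v j ≠ 0 := by
    by_contra h'; push_neg at h'; exact hne (funext h')
  set S : Finset (Fin n) := Finset.univ.filter fun j => v j ≠ 0 with hS
  have hSne : S.Nonempty := ⟨hex.choose, by simp [hS, hex.choose_spec]⟩
  set j0 := S.min' hSne with hj0
  have hj0mem : v j0 ≠ 0 := by have := S.min'_mem hSne; simpa [hS] using this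
  have hmin : ∀ j < j0, v j = 0 := by
    intro j hj
    by_contra hja
    exact absurd (S.min'_le j (by simp [hS, hja])) (not_le.2 hj)
  exact hj0mem (h _ (mem_pivotSet.2 ⟨v, hv, hj0mem, hmin⟩))

lemma leading_zeros {V : Submodule D (Fin n → D)} {k : Fin n} (hk : k ∈ pivotSet V)
    {w : Fin n → D} (hwV : w ∈ V) (hw0 : ∀ j ∈ pivotSet V, j ≠ k → w j = 0) :
    ∀ j < k, w j = 0 := by
  classical
  by_contra hcon
  push_neg at hcon
  set S : Finset (Fin n) := Finset.univ.filter fun j => j < k ∧ w j ≠ 0 with hS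
  have hSne : S.Nonempty := by
    obtain ⟨j, hj1, hj2⟩ := hcon
    exact ⟨j, by simp [hS, hj1, hj2]⟩
  set j0 := S.min' hSne with hj0
  have hj0mem : j0 < k ∧ w j0 ≠ 0 := by have := S.min'_mem hSne; simpa [hS] using this
  have hmin : ∀ j < j0, w j = 0 := by
    intro j hj
    by_contra hja
    have hjk : j < k := lt_trans hj hj0mem.1
    exact absurd (S.min'_le j (by simp [hS, hjk, hja])) (not_le.2 hj)
  have : j0 ∈ pivotSet V := mem_pivotSet.2 ⟨w, hwV, hj0mem.2, hmin⟩
  exact hj0mem.2 (hw0 _ this (ne_of_lt hj0mem.1))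

lemma exists_pivotVec {V : Submodule D (Fin n → D)} :
    ∀ k ∈ pivotSet V, ∃ w, w ∈ V ∧ w k = 1 ∧ ∀ j ∈ pivotSet V, j ≠ k → w j = 0 := by
  classical
  suffices H : ∀ d : ℕ, ∀ k ∈ pivotSet V, n - (k : ℕ) ≤ d →
      ∃ w, w ∈ V ∧ w k = 1 ∧ ∀ j ∈ pivotSet V, j ≠ k → w j = 0 by
    intro k hk; exact H n k hk (by omega)
  intro d
  induction d with
  | zero => intro k hk hd; exact absurd hd (by have := k.2; omega)
  | succ d ih =>
    intro k hk hd
    obtain ⟨v, hvV, hvk, hvlt⟩ := mem_pivotSet.1 hk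
    set u := (v k)⁻¹ • v with hu
    have huV : u ∈ V := V.smul_mem _ hvV
    have huk : u k = 1 := by simp [hu, inv_mul_cancel₀ hvk]
    have hult : ∀ j < k, u j = 0 := fun j hj => by simp [hu, hvlt j hj]
    have hWex : ∀ l : Fin n, ∃ w : Fin n → D, l ∈ pivotSet V ∧ k < l →
        w ∈ V ∧ w l = 1 ∧ ∀ j ∈ pivotSet V, j ≠ l → w j = 0 := by
      intro l
      by_cases hl : l ∈ pivotSet V ∧ k < l
      · obtain ⟨w, h1, h2, h3⟩ := ih l hl.1 (by have h := hl.2; have := k.2; omega)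
        exact ⟨w, fun _ => ⟨h1, h2, h3⟩⟩
      · exact ⟨0, fun h => absurd h hl⟩
    choose W hW using hWex
    set S : Finset (Fin n) := (pivotSet V).filter fun l => k < l with hSdef
    have hmemS : ∀ l ∈ S, l ∈ pivotSet V ∧ k < l := by
      intro l hl; simpa [hSdef] using hl
    refine ⟨u - ∑ l ∈ S, u l • W l, ?_, ?_, ?_⟩
    · exact V.sub_mem huV (V.sum_mem fun l hl => V.smul_mem _ ((hW l (hmemS l hl)).1))
    · have : (∑ l ∈ S, u l • W l) k = 0 := by
        rw [Finset.sum_apply]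
        refine Finset.sum_eq_zero fun l hl => ?_
        obtain ⟨hl1, hl2⟩ := hmemS l hl
        have : W l k = 0 := (hW l ⟨hl1, hl2⟩).2.2 k hk (ne_of_lt hl2)
        simp [this]
      simp [this, huk]
    · intro j hj hjk
      have hsum : (∑ l ∈ S, u l • W l) j = if j ∈ S then u j else 0 := by
        rw [Finset.sum_apply]
        by_cases hjS : j ∈ S
        · rw [Finset.sum_eq_single j]
          · simp [(hW j (hmemS j hjS)).2.1, hjS]
          · intro l hl hlj
            have := (hW l (hmemS l hl)).2.2 j hj hlj.symm  -- careful direction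
            simp [this]
          · intro h; exact absurd hjS h
        · rw [if_neg hjS]
          refine Finset.sum_eq_zero fun l hl => ?_
          have hlj : j ≠ l := by rintro rfl; exact hjS hl
          have := (hW l (hmemS l hl)).2.2 j hj hlj
          simp [this]
      by_cases hjS : j ∈ S
      · simp [hsum, hjS]
      · have hjlt : j < k := by
          rcases lt_or_gt_of_ne hjk with h | h
          · exact h
          · exact absurd (by simp [hSdef, hj, h]) hjS
        simp [hsum, hjS, hult j hjlt]

end Aux

section Aux2
variable {D : Type*} [DivisionRing D] {n : ℕ}

lemma exists_rref (V : Submodule D (Fin n → D)) :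
    ∃ R : Matrix (Fin n) (Fin n) D, IsRowReducedEchelon R ∧ LRS R = V := by
  classical
  have hWex : ∀ k : Fin n, ∃ w : Fin n → D, k ∈ pivotSet V →
      w ∈ V ∧ w k = 1 ∧ ∀ j ∈ pivotSet V, j ≠ k → w j = 0 := by
    intro k
    by_cases hk : k ∈ pivotSet V
    · obtain ⟨w, h⟩ := exists_pivotVec k hk
      exact ⟨w, fun _ => h⟩
    · exact ⟨0, fun h => absurd h hk⟩
  choose w hw using hWex
  set t := (pivotSet V).card with htdef
  have ht : t ≤ n := by
    have := Finset.card_le_univ (pivotSet V)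
    simpa [htdef] using this
  set ke : Fin t → Fin n := fun i => (pivotSet V).orderEmbOfFin rfl i with hkedef
  have hkemem : ∀ i, ke i ∈ pivotSet V := fun i => (pivotSet V).orderEmbOfFin_mem rfl i
  have hkemono : StrictMono ke := ((pivotSet V).orderEmbOfFin rfl).strictMono
  set R : Matrix (Fin n) (Fin n) D :=
    fun p => if h : (p : ℕ) < t then w (ke ⟨(p : ℕ), h⟩) else 0 with hRdef
  have hrow : ∀ i : Fin t, R (Fin.castLE ht i) = w (ke i) := by
    intro i
    have h : ((Fin.castLE ht i : Fin n) : ℕ) < t := i.2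
    simp only [hRdef, dif_pos h]
    congr 1
  have hzero : ∀ p : Fin n, t ≤ (p : ℕ) → R p = 0 := by
    intro p hp; simp [hRdef, not_lt.2 hp]
  refine ⟨R, ⟨t, ht, ke, hkemono, hzero, ?_, ?_, ?_⟩, ?_⟩
  · intro i; rw [hrow]; exact (hw _ (hkemem i)).2.1
  · intro i j hj
    rw [hrow]
    exact leading_zeros (hkemem i) (hw _ (hkemem i)).1 (hw _ (hkemem i)).2.2 j hj
  · intro i p hp
    by_cases h : (p : ℕ) < t
    · have hRp : R p = w (ke ⟨(p : ℕ), h⟩) := by simp [hRdef, dif_pos h]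
      rw [hRp]
      refine (hw _ (hkemem ⟨(p : ℕ), h⟩)).2.2 (ke i) (hkemem i) ?_
      intro hkeq
      exact hp (by simpa using (congrArg Fin.val (hkemono.injective hkeq)).symm)
    · simp [hzero p (not_lt.1 h)]
  · -- LRS R = V
    apply le_antisymm
    · rw [LRS, Submodule.span_le]
      rintro x ⟨p, rfl⟩
      by_cases h : (p : ℕ) < t
      · have hRp : R p = w (ke ⟨(p : ℕ), h⟩) := by simp [hRdef, dif_pos h]
        rw [hRp]; exact (hw _ (hkemem ⟨(p : ℕ), h⟩)).1
      · rw [hzero p (not_lt.1 h)]; exact V.zero_mem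
    · intro v hv
      have hrowmem : ∀ kk ∈ pivotSet V, w kk ∈ LRS R := by
        intro kk hkk
        obtain ⟨i, hi⟩ : ∃ i : Fin t, ke i = kk := by
          have : kk ∈ Set.range ((pivotSet V).orderEmbOfFin rfl) := by
            rw [Finset.range_orderEmbOfFin]; exact_mod_cast hkk
          obtain ⟨i, hi⟩ := this
          exact ⟨i, hi⟩
        have : w kk = R (Fin.castLE ht i) := by rw [hrow, hi]
        rw [this]
        exact Submodule.subset_span ⟨_, rfl⟩
      -- v = ∑ k ∈ pivotSet V, v k • w k
      have hrep : v = ∑ kk ∈ pivotSet V, v kk • w kk := by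
        have hu : v - ∑ kk ∈ pivotSet V, v kk • w kk = 0 := by
          refine eq_zero_of_forall_pivot (V := V)
            (V.sub_mem hv (V.sum_mem fun kk hkk => V.smul_mem _ (hw _ hkk).1)) ?_
          intro j hj
          have hsum : (∑ kk ∈ pivotSet V, v kk • w kk) j = v j := by
            rw [Finset.sum_apply]
            rw [Finset.sum_eq_single j]
            · simp [(hw _ hj).2.1]
            · intro l hl hlj
              have := (hw _ hl).2.2 j hj hlj.symm
              simp [this]
            · intro h; exact absurd hj h
          simp [hsum]
        have := sub_eq_zero.1 hu
        exact this
      rw [hrep]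
      exact Submodule.sum_mem _ fun kk hkk => Submodule.smul_mem _ _ (hrowmem kk hkk)

lemma sum_fin_castLE {M : Type*} [AddCommMonoid M] {t m : ℕ} (ht : t ≤ m) (f : Fin m → M)
    (hf : ∀ p : Fin m, t ≤ (p : ℕ) → f p = 0) :
    ∑ p, f p = ∑ i : Fin t, f (Fin.castLE ht i) := by
  classical
  have : ∑ i : Fin t, f (Fin.castLE ht i) = ∑ p ∈ Finset.univ.map (Fin.castLEEmb ht), f p := by
    rw [Finset.sum_map]; rfl
  rw [this]
  refine (Finset.sum_subset (Finset.subset_univ _) ?_).symm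
  intro p _ hp
  refine hf p ?_
  by_contra hlt
  push_neg at hlt
  exact hp (Finset.mem_map.2 ⟨⟨(p : ℕ), hlt⟩, Finset.mem_univ _, by simp [Fin.castLEEmb]⟩)

lemma rref_rep {m : ℕ} {R : Matrix (Fin m) (Fin n) D} {t : ℕ} (ht : t ≤ m) (k : Fin t → Fin n)
    (hzero : ∀ i : Fin m, t ≤ (i : ℕ) → R i = 0)
    (hone : ∀ i : Fin t, R (Fin.castLE ht i) (k i) = 1)
    (hcol : ∀ (i : Fin t) (p : Fin m), (p : ℕ) ≠ (i : ℕ) → R p (k i) = 0)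
    {v : Fin n → D} (hv : v ∈ LRS R) :
    v = ∑ i : Fin t, v (k i) • R (Fin.castLE ht i) := by
  obtain ⟨c, hc⟩ := (Submodule.mem_span_range_iff_exists_fun D).1 hv
  have hck : ∀ i : Fin t, v (k i) = c (Fin.castLE ht i) := by
    intro i
    rw [← hc, Finset.sum_apply]
    rw [Finset.sum_eq_single (Fin.castLE ht i)]
    · simp [hone i]
    · intro p _ hp
      have hpv : (p : ℕ) ≠ (i : ℕ) := fun h => hp (Fin.ext (by simpa using h))
      simp [hcol i p hpv]
    · intro h; exact absurd (Finset.mem_univ _) h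
  calc v = ∑ p, c p • R p := hc.symm
    _ = ∑ i : Fin t, c (Fin.castLE ht i) • R (Fin.castLE ht i) := by
        refine sum_fin_castLE ht _ fun p hp => ?_
        rw [hzero p hp, smul_zero]
    _ = ∑ i : Fin t, v (k i) • R (Fin.castLE ht i) := by
        refine Finset.sum_congr rfl fun i _ => ?_
        rw [hck i]

lemma rref_pivots {m : ℕ} {R : Matrix (Fin m) (Fin n) D} {t : ℕ} (ht : t ≤ m)
    (k : Fin t → Fin n)
    (hzero : ∀ i : Fin m, t ≤ (i : ℕ) → R i = 0)
    (hone : ∀ i : Fin t, R (Fin.castLE ht i) (k i) = 1)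
    (hlead : ∀ (i : Fin t) (j : Fin n), (j : ℕ) < (k i : ℕ) → R (Fin.castLE ht i) j = 0)
    (hcol : ∀ (i : Fin t) (p : Fin m), (p : ℕ) ≠ (i : ℕ) → R p (k i) = 0)
    (j : Fin n) : j ∈ pivotSet (LRS R) ↔ ∃ i, k i = j := by
  constructor
  · intro hj
    obtain ⟨v, hvm, hvj, hvlt⟩ := mem_pivotSet.1 hj
    by_contra hcon
    push_neg at hcon
    have hrep := rref_rep ht k hzero hone hcol hvm
    have hvj' : v j = ∑ i : Fin t, v (k i) * R (Fin.castLE ht i) j := by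
      conv_lhs => rw [hrep]
      rw [Finset.sum_apply]
      simp [smul_eq_mul]
    have : ∃ i ∈ Finset.univ, v (k i) * R (Fin.castLE ht i) j ≠ 0 :=
      Finset.exists_ne_zero_of_sum_ne_zero (by rw [← hvj']; exact hvj)
    obtain ⟨i, _, hi⟩ := this
    have h1 : v (k i) ≠ 0 := fun h => hi (by simp [h])
    have h2 : R (Fin.castLE ht i) j ≠ 0 := fun h => hi (by simp [h])
    have hki : (k i : ℕ) ≤ (j : ℕ) := by
      by_contra hlt
      push_neg at hlt
      exact h2 (hlead i j hlt)
    have hkij : k i < j := lt_of_le_of_ne (by exact_mod_cast hki) (hcon i)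
    exact h1 (hvlt _ hkij)
  · rintro ⟨i, rfl⟩
    refine mem_pivotSet.2 ⟨R (Fin.castLE ht i), Submodule.subset_span ⟨_, rfl⟩, ?_, ?_⟩
    · rw [hone i]; exact one_ne_zero
    · intro j hj; exact hlead i j hj

end Aux2

section Aux3
variable {D : Type*} [DivisionRing D] {n : ℕ}

lemma rref_unique {m : ℕ} {R R' : Matrix (Fin m) (Fin n) D}
    (h1 : IsRowReducedEchelon R) (h2 : IsRowReducedEchelon R')
    (h : LRS R = LRS R') : R = R' := by
  obtain ⟨t, ht, k, hmono, hzero, hone, hlead, hcol⟩ := h1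
  obtain ⟨t', ht', k', hmono', hzero', hone', hlead', hcol'⟩ := h2
  classical
  have hpiv : ∀ j : Fin n, j ∈ pivotSet (LRS R) ↔ ∃ i, k i = j :=
    rref_pivots ht k hzero hone hlead hcol
  have hpiv' : ∀ j : Fin n, j ∈ pivotSet (LRS R) ↔ ∃ i, k' i = j := by
    intro j; rw [h]; exact rref_pivots ht' k' hzero' hone' hlead' hcol' j
  have himg : Finset.univ.image k = pivotSet (LRS R) := by
    ext j
    simp only [Finset.mem_image, Finset.mem_univ, true_and]
    rw [hpiv j]
  have himg' : Finset.univ.image k' = pivotSet (LRS R) := by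
    ext j
    simp only [Finset.mem_image, Finset.mem_univ, true_and]
    rw [hpiv' j]
  have hcardt : (pivotSet (LRS R)).card = t := by
    rw [← himg, Finset.card_image_of_injective _ hmono.injective, Finset.card_univ,
      Fintype.card_fin]
  have hcardt' : (pivotSet (LRS R)).card = t' := by
    rw [← himg', Finset.card_image_of_injective _ hmono'.injective, Finset.card_univ,
      Fintype.card_fin]
  have htt : t = t' := by rw [← hcardt, hcardt']
  subst htt
  have hk : k = k' := by
    have e1 : k = ⇑((pivotSet (LRS R)).orderEmbOfFin hcardt) :=
      Finset.orderEmbOfFin_unique hcardt (fun x => (hpiv (k x)).2 ⟨x, rfl⟩) hmono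
    have e2 : k' = ⇑((pivotSet (LRS R)).orderEmbOfFin hcardt) :=
      Finset.orderEmbOfFin_unique hcardt (fun x => (hpiv' (k' x)).2 ⟨x, rfl⟩) hmono'
    rw [e1, e2]
  subst hk
  funext p
  by_cases hp : (p : ℕ) < t
  · have hRmem : R p ∈ LRS R := Submodule.subset_span ⟨_, rfl⟩
    have hR'mem : R' p ∈ LRS R := by rw [h]; exact Submodule.subset_span ⟨_, rfl⟩
    have hu : R p - R' p = 0 := by
      have humem : R p - R' p ∈ LRS R := Submodule.sub_mem _ hRmem hR'mem
      have hrep := rref_rep ht k hzero hone hcol humem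
      have hvan : ∀ j : Fin t, (R p - R' p) (k j) = 0 := by
        intro j
        by_cases hji : (j : ℕ) = (p : ℕ)
        · have hpj : Fin.castLE ht j = p := Fin.ext (by simpa using hji)
          have hpj' : Fin.castLE ht' j = p := Fin.ext (by simpa using hji)
          have e1 : R p (k j) = 1 := by rw [← hpj]; exact hone j
          have e2 : R' p (k j) = 1 := by rw [← hpj']; exact hone' j
          simp [e1, e2]
        · have e1 : R p (k j) = 0 := hcol j p (Ne.symm hji)
          have e2 : R' p (k j) = 0 := hcol' j p (Ne.symm hji)
          simp [e1, e2]
      rw [hrep]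
      refine Finset.sum_eq_zero fun j _ => ?_
      rw [hvan j, zero_smul]
    exact sub_eq_zero.1 hu
  · rw [hzero p (not_lt.1 hp), hzero' p (not_lt.1 hp)]

lemma range_mul_eq {m : ℕ} (R : Matrix (Fin n) (Fin n) D) :
    Set.range (fun X : Matrix (Fin m) (Fin n) D => X * R) =
      {A : Matrix (Fin m) (Fin n) D | ∀ p, A p ∈ LRS R} := by
  ext A
  constructor
  · rintro ⟨X, rfl⟩ p
    refine (Submodule.mem_span_range_iff_exists_fun D).2 ⟨X p, ?_⟩
    funext j
    rw [Finset.sum_apply]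
    simp [Matrix.mul_apply]
  · intro hA
    choose c hc using fun p => (Submodule.mem_span_range_iff_exists_fun D).1 (hA p)
    refine ⟨Matrix.of c, ?_⟩
    show Matrix.of c * R = A
    ext p j
    rw [Matrix.mul_apply, ← congrFun (hc p) j, Finset.sum_apply]
    simp

def singleRow {m : ℕ} (p : Fin m) (v : Fin n → D) : Matrix (Fin m) (Fin n) D :=
  fun q => if q = p then v else 0

lemma singleRow_mem {m : ℕ} (I : AddSubgroup (Matrix (Fin m) (Fin n) D))
    (hI : ∀ (P : Matrix (Fin m) (Fin m) D) (A : Matrix (Fin m) (Fin n) D),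
      A ∈ I → P * A ∈ I)
    {v : Fin n → D}
    (hv : v ∈ Submodule.span D {v : Fin n → D | ∃ A ∈ I, ∃ q, A q = v}) (p : Fin m) :
    singleRow p v ∈ I := by
  classical
  induction hv using Submodule.span_induction with
  | mem x hx =>
    obtain ⟨A, hA, q, rfl⟩ := hx
    have heq : singleRow p (A q) = Matrix.single p q (1 : D) * A := by
      ext r j
      rw [Matrix.mul_apply]
      by_cases hr : r = p
      · subst hr
        rw [Finset.sum_eq_single q]
        · simp [singleRow, Matrix.single]
        · intro s _ hs; simp [Matrix.single, hs.symm]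
        · intro h; exact absurd (Finset.mem_univ _) h
      · have : ∀ s, Matrix.single p q (1:D) r s = 0 := by
          intro s; simp [Matrix.single, Ne.symm hr]
        simp [singleRow, hr, this]
    rw [heq]
    exact hI _ _ hA
  | zero =>
    have : singleRow p (0 : Fin n → D) = 0 := by
      ext r j; simp [singleRow]
    rw [this]; exact I.zero_mem
  | add x y hx hy ihx ihy =>
    have : singleRow p (x + y) = singleRow p x + singleRow p y := by
      ext r j; by_cases hr : r = p <;> simp [singleRow, hr]
    rw [this]; exact I.add_mem ihx ihy
  | smul a x hx ihx =>
    have : singleRow p (a • x) = Matrix.single p p a * singleRow p x := by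
      ext r j
      rw [Matrix.mul_apply]
      by_cases hr : r = p
      · subst hr
        rw [Finset.sum_eq_single r]
        · simp [singleRow, Matrix.single]
        · intro s _ hs; simp [Matrix.single, hs.symm]
        · intro h; exact absurd (Finset.mem_univ _) h
      · have : ∀ s, Matrix.single p p a r s = 0 := by
          intro s; simp [Matrix.single, Ne.symm hr]
        simp [singleRow, hr, this]
    rw [this]; exact hI _ _ ihx

lemma mem_I_iff {m : ℕ} (I : AddSubgroup (Matrix (Fin m) (Fin n) D))
    (hI : ∀ (P : Matrix (Fin m) (Fin m) D) (A : Matrix (Fin m) (Fin n) D),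
      A ∈ I → P * A ∈ I) (A : Matrix (Fin m) (Fin n) D) :
    A ∈ I ↔ ∀ p, A p ∈ Submodule.span D {v : Fin n → D | ∃ A ∈ I, ∃ q, A q = v} := by
  constructor
  · intro hA p
    exact Submodule.subset_span ⟨A, hA, p, rfl⟩
  · intro hA
    have heq : A = ∑ p, singleRow p (A p) := by
      ext q j
      rw [Matrix.sum_apply]
      rw [Finset.sum_eq_single q]
      · simp [singleRow]
      · intro s _ hs; simp [singleRow, Ne.symm hs]
      · intro h; exact absurd (Finset.mem_univ _) h
    rw [heq]
    exact AddSubgroup.sum_mem I fun p _ => singleRow_mem I hI (hA p) p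

end Aux3

/-- Every left submodule `I` of `M_{m×n}(D)` is of the form
`M_{m×n}(D)·R` for a unique left row reduced echelon matrix `R ∈ M_n(D)`. -/
theorem exists_unique_rowReducedEchelon_of_leftSubmodule
    (D : Type*) [DivisionRing D] (m n : ℕ) (hm : 0 < m) (hn : 0 < n)
    (I : AddSubgroup (Matrix (Fin m) (Fin n) D))
    (hI : ∀ (P : Matrix (Fin m) (Fin m) D) (A : Matrix (Fin m) (Fin n) D),
      A ∈ I → P * A ∈ I) :
    ∃! R : Matrix (Fin n) (Fin n) D, IsRowReducedEchelon R ∧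
      (I : Set (Matrix (Fin m) (Fin n) D)) =
        Set.range (fun X : Matrix (Fin m) (Fin n) D => X * R) := by
  classical
  set V := Submodule.span D {v : Fin n → D | ∃ A ∈ I, ∃ q, A q = v} with hVdef
  obtain ⟨R, hR⟩ := exists_rref V
  have hsetI : (I : Set (Matrix (Fin m) (Fin n) D)) = {A | ∀ p, A p ∈ V} := by
    ext A
    simpa using mem_I_iff I hI A
  have incl : ∀ (W W' : Submodule D (Fin n → D)),
      ({A : Matrix (Fin m) (Fin n) D | ∀ p, A p ∈ W} ⊆ {A | ∀ p, A p ∈ W'}) → W ≤ W' := by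
    intro W W' hsub v hv
    have hmem : singleRow (⟨0, hm⟩ : Fin m) v ∈ {A : Matrix (Fin m) (Fin n) D | ∀ p, A p ∈ W} := by
      intro p
      by_cases hp : p = ⟨0, hm⟩
      · simp [singleRow, hp, hv]
      · simp [singleRow, hp, W.zero_mem]
    have := hsub hmem ⟨0, hm⟩
    simpa [singleRow] using this
  refine ⟨R, ⟨hR.1, ?_⟩, ?_⟩
  · rw [hsetI, range_mul_eq R, hR.2]
  · rintro R' ⟨h1', h2'⟩
    have h3 : {A : Matrix (Fin m) (Fin n) D | ∀ p, A p ∈ V} = {A | ∀ p, A p ∈ LRS R'} := by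
      rw [← hsetI, h2', range_mul_eq]
    have hLV : LRS R' = V :=
      le_antisymm (incl _ _ h3.symm.subset) (incl _ _ h3.subset)
    exact rref_unique h1' hR.1 (by rw [hLV, hR.2])
end

section
/- Let D be a division ring, m, n positive integers, and let R₁, R₂ ∈ M_n(D) be left row reduced echelon matrices. If R, R' ∈ M_n(D) are the (unique) left row reduced echelon matrices with LRS(R) = LRS(R₁) + LRS(R₂) and LRS(R') = LRS(R₁) ∩ LRS(R₂), then M_{m×n}(D)·R₁ + M_{m×n}(D)·R₂ = M_{m×n}(D)·R and (M_{m×n}(D)·R₁) ∩ (M_{m×n}(D)·R₂) = M_{m×n}(D)·R', where M_{m×n}(D)·S := {X·S : X ∈ M_{m×n}(D)}. -/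
open Matrix Pointwise

lemma range_mul_eq_rows {D : Type*} [DivisionRing D] {m n : ℕ}
    (S : Matrix (Fin n) (Fin n) D) :
    Set.range (fun X : Matrix (Fin m) (Fin n) D => X * S) =
      {Y : Matrix (Fin m) (Fin n) D | ∀ p, Y p ∈ LRS S} := by
  ext Y
  constructor
  · rintro ⟨X, rfl⟩ p
    rw [LRS, Submodule.mem_span_range_iff_exists_fun (R := D) (v := S)]
    refine ⟨X p, ?_⟩
    funext j
    simp [Matrix.mul_apply, Finset.sum_apply]
  · intro h
    have h' : ∀ p, ∃ c : Fin n → D, ∑ i, c i • S i = Y p := by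
      intro p
      have := h p
      rwa [LRS, Submodule.mem_span_range_iff_exists_fun (R := D) (v := S)] at this
    choose c hc using h'
    refine ⟨Matrix.of c, ?_⟩
    funext p j
    have := congrFun (hc p) j
    simpa [Matrix.mul_apply, Finset.sum_apply] using this

/-- The left submodules `M_{m×n}(D)·R₁ + M_{m×n}(D)·R₂` and
`(M_{m×n}(D)·R₁) ∩ (M_{m×n}(D)·R₂)` correspond to the row reduced echelon matrices whose
row spaces are `LRS(R₁) + LRS(R₂)` and `LRS(R₁) ∩ LRS(R₂)` respectively. -/
theorem leftSubmodule_sup_inf_rowReducedEchelon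
    (D : Type*) [DivisionRing D] (m n : ℕ) (hm : 0 < m) (hn : 0 < n)
    (R₁ R₂ R R' : Matrix (Fin n) (Fin n) D)
    (h₁ : IsRowReducedEchelon R₁) (h₂ : IsRowReducedEchelon R₂)
    (hR : IsRowReducedEchelon R) (hR' : IsRowReducedEchelon R')
    (hsup : LRS R = LRS R₁ ⊔ LRS R₂) (hinf : LRS R' = LRS R₁ ⊓ LRS R₂) :
    Set.range (fun X : Matrix (Fin m) (Fin n) D => X * R₁) +
        Set.range (fun X : Matrix (Fin m) (Fin n) D => X * R₂) =
      Set.range (fun X : Matrix (Fin m) (Fin n) D => X * R) ∧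
    Set.range (fun X : Matrix (Fin m) (Fin n) D => X * R₁) ∩
        Set.range (fun X : Matrix (Fin m) (Fin n) D => X * R₂) =
      Set.range (fun X : Matrix (Fin m) (Fin n) D => X * R') := by
  rw [range_mul_eq_rows, range_mul_eq_rows, range_mul_eq_rows, range_mul_eq_rows,
    hsup, hinf] at *
  constructor
  · ext Y
    constructor
    · rintro ⟨A, hA, B, hB, rfl⟩ p
      exact Submodule.add_mem_sup (hA p) (hB p)
    · intro h
      have h' : ∀ p, ∃ a ∈ LRS R₁, ∃ b ∈ LRS R₂, a + b = Y p := by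
        intro p
        have := h p
        rwa [Submodule.mem_sup] at this
      choose a ha b hb hab using h'
      exact ⟨Matrix.of a, ha, Matrix.of b, hb, by funext p j; exact congrFun (hab p) j⟩
  · ext Y
    simp only [Set.mem_inter_iff, Set.mem_setOf_eq, Submodule.mem_inf]
    constructor
    · rintro ⟨hA, hB⟩ p
      exact ⟨hA p, hB p⟩
    · intro h
      exact ⟨fun p => (h p).1, fun p => (h p).2⟩
end

section
/- Let D be a division ring and m, n positive integers. For every right submodule I of M_{m×n}(D) (an additive subgroup with I·M_n(D) ⊆ I) there exists a unique right column reduced echelon matrix C ∈ M_m(D) such that I = C·M_{m×n}(D) := {C·Y : Y ∈ M_{m×n}(D)}. -/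
open Matrix Pointwise

namespace EchelonProof
open MulOpposite


variable {D : Type*} [DivisionRing D] {m : ℕ}

open Classical in
noncomputable def pivots (W : Submodule Dᵐᵒᵖ (Fin m → D)) : Finset (Fin m) :=
  Finset.univ.filter fun j => ∃ w ∈ W, w j ≠ 0 ∧ ∀ l, l < j → w l = 0

lemma mem_pivots {W : Submodule Dᵐᵒᵖ (Fin m → D)} {j : Fin m} :
    j ∈ pivots W ↔ ∃ w ∈ W, w j ≠ 0 ∧ ∀ l, l < j → w l = 0 := by
  simp [pivots]

lemma vanish_on_pivots {W : Submodule Dᵐᵒᵖ (Fin m → D)} {w : Fin m → D}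
    (hw : w ∈ W) (h : ∀ j ∈ pivots W, w j = 0) : w = 0 := by
  classical
  by_contra hne
  have hs : (Finset.univ.filter fun j => w j ≠ 0).Nonempty := by
    rcases Function.ne_iff.1 hne with ⟨j, hj⟩
    exact ⟨j, by simpa using hj⟩
  have hj0mem := Finset.min'_mem _ hs
  set j0 := Finset.min' _ hs
  have hwj0 : w j0 ≠ 0 := (Finset.mem_filter.1 hj0mem).2
  have hlow : ∀ l, l < j0 → w l = 0 := by
    intro l hl
    by_contra hl0
    exact absurd (Finset.min'_le _ l (by simpa using hl0)) (not_le.2 hl)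
  exact hwj0 (h j0 (mem_pivots.2 ⟨w, hw, hwj0, hlow⟩))

lemma exists_echelon (W : Submodule Dᵐᵒᵖ (Fin m → D)) :
    ∃ R : Matrix (Fin m) (Fin m) D, IsRowReducedEchelon R ∧
      Submodule.span Dᵐᵒᵖ (Set.range R) = W := by
  classical
  set t := (pivots W).card with htdef
  have ht : t ≤ m := by
    simpa using Finset.card_le_univ (pivots W)
  set k : Fin t → Fin m := fun i => (pivots W).orderEmbOfFin rfl i with hkdef
  have hkmono : StrictMono k := ((pivots W).orderEmbOfFin rfl).strictMono
  have hkmem : ∀ i, k i ∈ pivots W := fun i => (pivots W).orderEmbOfFin_mem rfl i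
  have hkrange : ∀ j ∈ pivots W, ∃ i, k i = j := by
    intro j hj
    have : j ∈ Set.range ⇑((pivots W).orderEmbOfFin rfl) := by
      rw [Finset.range_orderEmbOfFin]; exact_mod_cast hj
    exact this
  -- normalized pivot witnesses
  have hpiv : ∀ i : Fin t, ∃ u ∈ W, u (k i) = 1 ∧ ∀ l, l < k i → u l = 0 := by
    intro i
    obtain ⟨w, hw, hwne, hlow⟩ := mem_pivots.1 (hkmem i)
    refine ⟨op (w (k i))⁻¹ • w, W.smul_mem _ hw, ?_, ?_⟩
    · simp [smul_eq_mul_unop, mul_inv_cancel₀ hwne]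
    · intro l hl; simp [smul_eq_mul_unop, hlow l hl]
  set S : Submodule Dᵐᵒᵖ (Fin t → D) := W.map (LinearMap.funLeft Dᵐᵒᵖ D k) with hSdef
  have hsingle : ∀ (j : ℕ) (i : Fin t), t - (i : ℕ) ≤ j → (Pi.single i (1:D) : Fin t → D) ∈ S := by
    intro j
    induction j with
    | zero => intro i hi; exact absurd hi (by have := i.2; omega)
    | succ j ih =>
      intro i hi
      obtain ⟨u, huW, hu1, hulow⟩ := hpiv i
      have huS : (fun i' => u (k i')) ∈ S := ⟨u, huW, rfl⟩
      have key : (Pi.single i (1:D) : Fin t → D)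
          = (fun i' => u (k i'))
            - ∑ i' ∈ Finset.univ.filter (fun i' => i < i'), op (u (k i')) • Pi.single i' (1:D) := by
        funext i''
        have hsum : (∑ i' ∈ Finset.univ.filter (fun i' => i < i'),
            op (u (k i')) • (Pi.single i' (1:D) : Fin t → D)) i''
            = if i < i'' then u (k i'') else 0 := by
          rw [Finset.sum_apply]
          have : ∀ i' ∈ Finset.univ.filter (fun i' : Fin t => i < i'),
              (op (u (k i')) • (Pi.single i' (1:D) : Fin t → D)) i''
              = if i'' = i' then u (k i') else 0 := by
            intro i' _
            simp [smul_eq_mul_unop, Pi.single_apply]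
          rw [Finset.sum_congr rfl this, Finset.sum_ite_eq]
          simp
        simp only [Pi.sub_apply, hsum, Pi.single_apply]
        rcases lt_trichotomy i'' i with h | h | h
        · rw [if_neg h.ne, if_neg (not_lt.2 h.le)]
          rw [hulow (k i'') (hkmono h)]; simp
        · subst h; simp [hu1]
        · rw [if_neg h.ne', if_pos h]; simp
      rw [key]
      refine sub_mem huS (Submodule.sum_mem _ ?_)
      intro i' hi'
      have hii' : i < i' := (Finset.mem_filter.1 hi').2
      refine S.smul_mem _ (ih i' ?_)
      have := i'.2
      have : (i : ℕ) < (i' : ℕ) := hii'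
      omega
  have hStop : ∀ c : Fin t → D, c ∈ S := by
    intro c
    have hc : c = ∑ i : Fin t, op (c i) • (Pi.single i (1:D) : Fin t → D) := by
      funext i'
      rw [Finset.sum_apply]
      have : ∀ i ∈ Finset.univ, (op (c i) • (Pi.single i (1:D) : Fin t → D)) i'
          = if i' = i then c i else 0 := by
        intro i _
        simp [smul_eq_mul_unop, Pi.single_apply]
      rw [Finset.sum_congr rfl this, Finset.sum_ite_eq]
      simp
    rw [hc]
    exact Submodule.sum_mem _ fun i _ => S.smul_mem _ (hsingle t i (by omega))
  have hv : ∀ i : Fin t, ∃ v ∈ W, ∀ i', v (k i') = if i' = i then 1 else 0 := by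
    intro i
    obtain ⟨v, hvW, hvπ⟩ := hStop (Pi.single i (1:D))
    refine ⟨v, hvW, fun i' => ?_⟩
    have h1 : (LinearMap.funLeft Dᵐᵒᵖ D k) v i' = v (k i') := rfl
    rw [← h1, hvπ, Pi.single_apply]
  choose v hvW hvval using hv
  have hvlow : ∀ (i : Fin t) (l : Fin m), l < k i → v i l = 0 := by
    intro i
    by_contra hbad
    push_neg at hbad
    obtain ⟨l, hl, hne⟩ := hbad
    have hs : (Finset.univ.filter fun l' => l' < k i ∧ v i l' ≠ 0).Nonempty :=
      ⟨l, by simp [hl, hne]⟩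
    have hl0mem := Finset.min'_mem _ hs
    set l0 := Finset.min' _ hs
    obtain ⟨hl0lt, hl0ne⟩ := (Finset.mem_filter.1 hl0mem).2
    have hl0piv : l0 ∈ pivots W := by
      refine mem_pivots.2 ⟨v i, hvW i, hl0ne, ?_⟩
      intro l' hl'
      by_contra hne'
      exact absurd (Finset.min'_le _ l' (by simp [lt_trans hl' hl0lt, hne'])) (not_le.2 hl')
    obtain ⟨i', hi'⟩ := hkrange l0 hl0piv
    have : v i (k i') ≠ 0 := by rw [hi']; exact hl0ne
    rw [hvval] at this
    have hii : i' = i := by by_contra hx; simp [hx] at this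
    subst hii
    rw [← hi'] at hl0lt
    exact lt_irrefl _ hl0lt
  set R : Matrix (Fin m) (Fin m) D :=
    fun p => if h : (p : ℕ) < t then v ⟨(p : ℕ), h⟩ else 0 with hRdef
  have hRrow : ∀ i : Fin t, R (Fin.castLE ht i) = v i := by
    intro i
    show (if h : ((Fin.castLE ht i : Fin m) : ℕ) < t then v ⟨_, h⟩ else 0) = v i
    rw [dif_pos (by simpa using i.2)]
    congr 1
  refine ⟨R, ⟨t, ht, k, hkmono, ?_, ?_, ?_, ?_⟩, ?_⟩
  · intro p hp
    show (if h : (p : ℕ) < t then v ⟨_, h⟩ else 0) = 0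
    rw [dif_neg (not_lt.2 hp)]
  · intro i; rw [hRrow, hvval]; simp
  · intro i j hj; rw [hRrow]; exact hvlow i j hj
  · intro i p hp
    by_cases h : (p : ℕ) < t
    · have : R p = v ⟨(p : ℕ), h⟩ := dif_pos h
      rw [this, hvval]
      refine if_neg ?_
      intro hx
      exact hp (by rw [hx])
    · have : R p = 0 := dif_neg h
      rw [this]; rfl
  · apply le_antisymm
    · rw [Submodule.span_le]
      rintro x ⟨p, rfl⟩
      by_cases h : (p : ℕ) < t
      · have : R p = v ⟨(p : ℕ), h⟩ := dif_pos h
        rw [this]; exact hvW _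
      · have : R p = 0 := dif_neg h
        rw [this]; exact W.zero_mem
    · intro w hw
      have hsum : (∑ i : Fin t, op (w (k i)) • v i) ∈ Submodule.span Dᵐᵒᵖ (Set.range R) :=
        Submodule.sum_mem _ fun i _ => Submodule.smul_mem _ _
          (Submodule.subset_span ⟨Fin.castLE ht i, hRrow i⟩)
      have hWsum : (∑ i : Fin t, op (w (k i)) • v i) ∈ W :=
        Submodule.sum_mem _ fun i _ => W.smul_mem _ (hvW i)
      have hdz : w - ∑ i : Fin t, op (w (k i)) • v i = 0 := by
        apply vanish_on_pivots (W.sub_mem hw hWsum)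
        intro j hj
        obtain ⟨i', rfl⟩ := hkrange j hj
        have hval : (∑ i : Fin t, op (w (k i)) • v i) (k i') = w (k i') := by
          rw [Finset.sum_apply]
          have : ∀ i ∈ Finset.univ, (op (w (k i)) • v i) (k i')
              = if i' = i then w (k i) else 0 := by
            intro i _
            simp [smul_eq_mul_unop, hvval]
          rw [Finset.sum_congr rfl this, Finset.sum_ite_eq]
          simp
        simp [hval]
      have : w = ∑ i : Fin t, op (w (k i)) • v i := by
        have := sub_eq_zero.1 hdz; exact this
      rw [this]; exact hsum




variable {D : Type*} [DivisionRing D] {m : ℕ}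

lemma echelon_coeff {R : Matrix (Fin m) (Fin m) D} {t : ℕ} (ht : t ≤ m) {k : Fin t → Fin m}
    (hone : ∀ i : Fin t, R (Fin.castLE ht i) (k i) = 1)
    (hcol : ∀ (i : Fin t) (p : Fin m), (p : ℕ) ≠ (i : ℕ) → R p (k i) = 0)
    (c : Fin m → Dᵐᵒᵖ) (i : Fin t) :
    (∑ p, c p • R p) (k i) = unop (c (Fin.castLE ht i)) := by
  rw [Finset.sum_apply, Finset.sum_eq_single (Fin.castLE ht i)]
  · simp [smul_eq_mul_unop, hone i]
  · intro p _ hp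
    have hpv : (p : ℕ) ≠ (i : ℕ) := fun hx => hp (Fin.ext (by simpa using hx))
    simp [smul_eq_mul_unop, hcol i p hpv]
  · simp

/-- Any element of the row span that vanishes on all pivot columns is zero. -/
lemma echelon_vanish {R : Matrix (Fin m) (Fin m) D} {t : ℕ} (ht : t ≤ m) {k : Fin t → Fin m}
    (hzero : ∀ i : Fin m, t ≤ (i : ℕ) → R i = 0)
    (hone : ∀ i : Fin t, R (Fin.castLE ht i) (k i) = 1)
    (hcol : ∀ (i : Fin t) (p : Fin m), (p : ℕ) ≠ (i : ℕ) → R p (k i) = 0)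
    {w : Fin m → D} (hw : w ∈ Submodule.span Dᵐᵒᵖ (Set.range R))
    (hz : ∀ i : Fin t, w (k i) = 0) : w = 0 := by
  obtain ⟨c, hc⟩ := (Submodule.mem_span_range_iff_exists_fun Dᵐᵒᵖ).1 hw
  have hcz : ∀ i : Fin t, c (Fin.castLE ht i) = 0 := by
    intro i
    have := echelon_coeff ht hone hcol c i
    rw [hc, hz i] at this
    exact unop_injective this.symm
  rw [← hc]
  apply Finset.sum_eq_zero
  intro p _
  by_cases h : (p : ℕ) < t
  · have : p = Fin.castLE ht ⟨(p : ℕ), h⟩ := Fin.ext rfl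
    rw [this, hcz ⟨(p : ℕ), h⟩, zero_smul]
  · rw [hzero p (not_lt.1 h), smul_zero]


lemma pivots_span_eq {R : Matrix (Fin m) (Fin m) D} {t : ℕ} (ht : t ≤ m) {k : Fin t → Fin m}
    (hmono : StrictMono k)
    (hzero : ∀ i : Fin m, t ≤ (i : ℕ) → R i = 0)
    (hone : ∀ i : Fin t, R (Fin.castLE ht i) (k i) = 1)
    (hlow : ∀ (i : Fin t) (j : Fin m), (j : ℕ) < (k i : ℕ) → R (Fin.castLE ht i) j = 0)
    (hcol : ∀ (i : Fin t) (p : Fin m), (p : ℕ) ≠ (i : ℕ) → R p (k i) = 0) :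
    pivots (Submodule.span Dᵐᵒᵖ (Set.range R)) = Finset.univ.image k := by
  apply Finset.ext
  intro j
  constructor
  · intro hj
    obtain ⟨w, hw, hwne, hlw⟩ := mem_pivots.1 hj
    obtain ⟨c, hc⟩ := (Submodule.mem_span_range_iff_exists_fun Dᵐᵒᵖ).1 hw
    by_contra hjim
    apply hwne
    rw [← hc, Finset.sum_apply]
    apply Finset.sum_eq_zero
    intro p _
    by_cases h : (p : ℕ) < t
    · set i : Fin t := ⟨(p : ℕ), h⟩ with hidef
      have hpc : p = Fin.castLE ht i := Fin.ext rfl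
      have hterm : (c p • R p) j = R p j * unop (c p) := by
        simp [smul_eq_mul_unop]
      rcases lt_trichotomy (k i) j with hlt | heq | hgt
      · have : unop (c p) = w (k i) := by
          rw [← hc]
          rw [hpc, ← echelon_coeff ht hone hcol c i]
        rw [hterm, this, hlw (k i) hlt, mul_zero]
      · exact absurd (Finset.mem_image.2 ⟨i, Finset.mem_univ i, heq⟩) (heq ▸ hjim)
      · rw [hterm, hpc, hlow i j hgt, zero_mul]
    · rw [hzero p (not_lt.1 h)]
      simp
  · intro hj
    obtain ⟨i, _, rfl⟩ := Finset.mem_image.1 hj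
    refine mem_pivots.2 ⟨R (Fin.castLE ht i), Submodule.subset_span ⟨_, rfl⟩, ?_, ?_⟩
    · rw [hone i]; exact one_ne_zero
    · intro l hl; exact hlow i l hl


lemma echelon_unique {R R' : Matrix (Fin m) (Fin m) D}
    (hR : IsRowReducedEchelon R) (hR' : IsRowReducedEchelon R')
    (hspan : Submodule.span Dᵐᵒᵖ (Set.range R) = Submodule.span Dᵐᵒᵖ (Set.range R')) :
    R = R' := by
  classical
  obtain ⟨t, ht, k, hmono, hzero, hone, hlow, hcol⟩ := hR
  obtain ⟨t', ht', k', hmono', hzero', hone', hlow', hcol'⟩ := hR'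
  have himg : Finset.univ.image k = Finset.univ.image k' := by
    rw [← pivots_span_eq ht hmono hzero hone hlow hcol,
      ← pivots_span_eq ht' hmono' hzero' hone' hlow' hcol', hspan]
  have htt : t = t' := by
    have h1 : (Finset.univ.image k).card = t := by
      rw [Finset.card_image_of_injective _ hmono.injective]
      simp
    have h2 : (Finset.univ.image k').card = t' := by
      rw [Finset.card_image_of_injective _ hmono'.injective]
      simp
    rw [← h1, ← h2, himg]
  subst htt
  have hcard : (Finset.univ.image k).card = t := by
    rw [Finset.card_image_of_injective _ hmono.injective]; simp
  have hkk : k = k' := by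
    have e1 : k = ⇑((Finset.univ.image k).orderEmbOfFin hcard) :=
      Finset.orderEmbOfFin_unique hcard
        (fun x => Finset.mem_image_of_mem k (Finset.mem_univ x)) hmono
    have e2 : k' = ⇑((Finset.univ.image k).orderEmbOfFin hcard) :=
      Finset.orderEmbOfFin_unique hcard
        (fun x => himg ▸ Finset.mem_image_of_mem k' (Finset.mem_univ x)) hmono'
    rw [e1, e2]
  subst hkk
  funext p
  by_cases h : (p : ℕ) < t
  · set i : Fin t := ⟨(p : ℕ), h⟩ with hidef
    have hpc : p = Fin.castLE ht i := Fin.ext rfl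
    have hmem : R p - R' p ∈ Submodule.span Dᵐᵒᵖ (Set.range R) := by
      refine sub_mem (Submodule.subset_span ⟨p, rfl⟩) ?_
      rw [hspan]
      exact Submodule.subset_span ⟨p, rfl⟩
    have hz : ∀ i' : Fin t, (R p - R' p) (k i') = 0 := by
      intro i'
      by_cases hii : i' = i
      · subst hii
        rw [hpc]
        have h1 : R (Fin.castLE ht i) (k i) = 1 := hone i
        have h2 : R' (Fin.castLE ht i) (k i) = 1 := hone' i
        simp [h1, h2]
      · have hv : (p : ℕ) ≠ (i' : ℕ) := by
          intro hx
          exact hii (Fin.ext (by rw [← hx]))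
        simp [hcol i' p hv, hcol' i' p hv]
    have := echelon_vanish ht hzero hone hcol hmem hz
    exact sub_eq_zero.1 this
  · rw [hzero p (not_lt.1 h), hzero' p (not_lt.1 h)]


def colM (j0 : Fin n) (v : Fin m → D) : Matrix (Fin m) (Fin n) D :=
  fun p q => if q = j0 then v p else 0

lemma colM_add (j0 : Fin n) (v w : Fin m → D) :
    colM j0 (v + w) = colM j0 v + colM j0 w := by
  funext p q
  by_cases h : q = j0 <;> simp [colM, h]

lemma colM_zero (j0 : Fin n) : colM j0 (0 : Fin m → D) = 0 := by
  funext p q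
  by_cases h : q = j0 <;> simp [colM, h]

lemma colM_smul (j0 : Fin n) (c : Dᵐᵒᵖ) (v : Fin m → D) :
    colM j0 (c • v) =
      colM j0 v * (Matrix.of fun l q => if l = j0 ∧ q = j0 then unop c else 0) := by
  classical
  funext p q
  rw [Matrix.mul_apply]
  simp only [Matrix.of_apply]
  have h : ∀ l ∈ Finset.univ, colM j0 v p l *
      (if l = j0 ∧ q = j0 then unop c else 0)
      = if l = j0 then (if q = j0 then v p * unop c else 0) else 0 := by
    intro l _
    by_cases h1 : l = j0 <;> by_cases h2 : q = j0 <;> simp [colM, h1, h2]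
  rw [Finset.sum_congr rfl h, Finset.sum_ite_eq']
  by_cases h2 : q = j0 <;> simp [colM, h2, smul_eq_mul_unop]

lemma colM_col (j0 : Fin n) (A : Matrix (Fin m) (Fin n) D) (q : Fin n) :
    colM j0 (fun p => A p q) =
      A * (Matrix.of fun l q' => if l = q ∧ q' = j0 then (1:D) else 0) := by
  classical
  funext p q'
  rw [Matrix.mul_apply]
  simp only [Matrix.of_apply]
  have h : ∀ l ∈ Finset.univ, A p l * (if l = q ∧ q' = j0 then (1:D) else 0)
      = if l = q then (if q' = j0 then A p q else 0) else 0 := by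
    intro l _
    by_cases h1 : l = q <;> by_cases h2 : q' = j0 <;> simp [h1, h2]
  rw [Finset.sum_congr rfl h, Finset.sum_ite_eq']
  by_cases h2 : q' = j0 <;> simp [colM, h2]

lemma colM_recon (j0 : Fin n) (A : Matrix (Fin m) (Fin n) D) :
    A = ∑ q : Fin n, colM j0 (fun p => A p q) *
      (Matrix.of fun l q' => if l = j0 ∧ q' = q then (1:D) else 0) := by
  classical
  funext p q'
  rw [Matrix.sum_apply]
  have h : ∀ q ∈ Finset.univ,
      (colM j0 (fun p => A p q) * (Matrix.of fun l q'' => if l = j0 ∧ q'' = q then (1:D) else 0)) p q'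
      = if q' = q then A p q else 0 := by
    intro q _
    rw [Matrix.mul_apply]
    simp only [Matrix.of_apply]
    have h2 : ∀ l ∈ Finset.univ, colM j0 (fun p => A p q) p l *
        (if l = j0 ∧ q' = q then (1:D) else 0)
        = if l = j0 then (if q' = q then A p q else 0) else 0 := by
      intro l _
      by_cases h1 : l = j0 <;> by_cases h3 : q' = q <;> simp [colM, h1, h3]
    rw [Finset.sum_congr rfl h2, Finset.sum_ite_eq']
    simp
  rw [Finset.sum_congr rfl h, Finset.sum_ite_eq]
  simp

lemma range_mul_iff (C : Matrix (Fin m) (Fin m) D) (A : Matrix (Fin m) (Fin n) D) :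
    (A ∈ Set.range (fun Y : Matrix (Fin m) (Fin n) D => C * Y)) ↔
      ∀ q, (fun p => A p q) ∈ Submodule.span Dᵐᵒᵖ (Set.range Cᵀ) := by
  constructor
  · rintro ⟨Y, rfl⟩ q
    have : (fun p => (C * Y) p q) = ∑ j : Fin m, op (Y j q) • Cᵀ j := by
      funext p
      rw [Finset.sum_apply, Matrix.mul_apply]
      apply Finset.sum_congr rfl
      intro j _
      simp [smul_eq_mul_unop, Matrix.transpose_apply]
    rw [this]
    exact Submodule.sum_mem _ fun j _ =>
      Submodule.smul_mem _ _ (Submodule.subset_span ⟨j, rfl⟩)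
  · intro h
    have hc : ∀ q, ∃ c : Fin m → Dᵐᵒᵖ, ∑ j, c j • Cᵀ j = fun p => A p q :=
      fun q => (Submodule.mem_span_range_iff_exists_fun Dᵐᵒᵖ).1 (h q)
    choose c hcc using hc
    refine ⟨Matrix.of fun j q => unop (c q j), ?_⟩
    funext p q
    have := congrFun (hcc q) p
    rw [Finset.sum_apply] at this
    show (C * Matrix.of fun j q => unop (c q j)) p q = A p q
    rw [Matrix.mul_apply, ← this]
    simp only [Matrix.of_apply]
    apply Finset.sum_congr rfl
    intro j _
    simp [smul_eq_mul_unop, Matrix.transpose_apply]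


end EchelonProof

/-- Every right submodule `I` of `M_{m×n}(D)` is of the form
`C·M_{m×n}(D)` for a unique right column reduced echelon matrix `C ∈ M_m(D)`. -/
theorem exists_unique_colReducedEchelon_of_rightSubmodule
    (D : Type*) [DivisionRing D] (m n : ℕ) (hm : 0 < m) (hn : 0 < n)
    (I : AddSubgroup (Matrix (Fin m) (Fin n) D))
    (hI : ∀ (A : Matrix (Fin m) (Fin n) D) (Q : Matrix (Fin n) (Fin n) D),
      A ∈ I → A * Q ∈ I) :
    ∃! C : Matrix (Fin m) (Fin m) D, IsColReducedEchelon C ∧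
      (I : Set (Matrix (Fin m) (Fin n) D)) =
        Set.range (fun Y : Matrix (Fin m) (Fin n) D => C * Y) := by
  classical
  set j0 : Fin n := ⟨0, hn⟩ with hj0
  set V : Submodule Dᵐᵒᵖ (Fin m → D) :=
    { carrier := {v | EchelonProof.colM j0 v ∈ I}
      add_mem' := fun {a b} ha hb => by
        simp only [Set.mem_setOf_eq] at *
        rw [EchelonProof.colM_add]
        exact I.add_mem ha hb
      zero_mem' := by
        simp only [Set.mem_setOf_eq]
        rw [EchelonProof.colM_zero]
        exact I.zero_mem
      smul_mem' := fun c v hv => by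
        simp only [Set.mem_setOf_eq] at *
        rw [EchelonProof.colM_smul]
        exact hI _ _ hv } with hVdef
  have hVmem : ∀ v : Fin m → D, v ∈ V ↔ EchelonProof.colM j0 v ∈ I := fun v => Iff.rfl
  have hL1 : ∀ A ∈ I, ∀ q, (fun p => A p q) ∈ V := by
    intro A hA q
    rw [hVmem, EchelonProof.colM_col]
    exact hI _ _ hA
  have hL2 : ∀ A : Matrix (Fin m) (Fin n) D, (∀ q, (fun p => A p q) ∈ V) → A ∈ I := by
    intro A hA
    rw [EchelonProof.colM_recon j0 A]
    exact AddSubgroup.sum_mem I fun q _ => hI _ _ (hA q)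
  obtain ⟨R, hech, hspan⟩ := EchelonProof.exists_echelon V
  refine ⟨Rᵀ, ⟨?_, ?_⟩, ?_⟩
  · show IsRowReducedEchelon Rᵀᵀ
    rw [Matrix.transpose_transpose]
    exact hech
  · ext A
    rw [EchelonProof.range_mul_iff]
    constructor
    · intro hA q
      rw [Matrix.transpose_transpose, hspan]
      exact hL1 A hA q
    · intro hA
      refine hL2 A fun q => ?_
      rw [← hspan]
      have := hA q
      rwa [Matrix.transpose_transpose] at this
  · rintro C' ⟨hC', hC'eq⟩
    have hC'2 : IsRowReducedEchelon C'ᵀ := hC'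
    have hspan' : Submodule.span Dᵐᵒᵖ (Set.range C'ᵀ) = V := by
      ext v
      rw [hVmem]
      have h1 : EchelonProof.colM j0 v ∈ I ↔
          ∀ q, (fun p => EchelonProof.colM j0 v p q) ∈
            Submodule.span Dᵐᵒᵖ (Set.range C'ᵀ) := by
        rw [← EchelonProof.range_mul_iff]
        constructor
        · intro h
          have h2 : EchelonProof.colM j0 v ∈ (I : Set (Matrix (Fin m) (Fin n) D)) := h
          rwa [hC'eq] at h2
        · intro h
          have h2 : EchelonProof.colM j0 v ∈ (I : Set (Matrix (Fin m) (Fin n) D)) := by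
            rw [hC'eq]; exact h
          exact h2
      rw [h1]
      constructor
      · intro h q
        by_cases hq : q = j0
        · have he : (fun p => EchelonProof.colM j0 v p q) = v := by
            funext p; simp [EchelonProof.colM, hq]
          rw [he]; exact h
        · have he : (fun p => EchelonProof.colM j0 v p q) = (0 : Fin m → D) := by
            funext p; simp [EchelonProof.colM, hq]
          rw [he]; exact Submodule.zero_mem _
      · intro h
        have h2 := h j0
        have he : (fun p => EchelonProof.colM j0 v p j0) = v := by
          funext p; simp [EchelonProof.colM]
        rwa [he] at h2
    have hCt : C'ᵀ = R :=
      EchelonProof.echelon_unique hC'2 hech (by rw [hspan', hspan])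
    calc C' = C'ᵀᵀ := (Matrix.transpose_transpose C').symm
      _ = Rᵀ := by rw [hCt]
end

section
/- Let D be a division ring, n a positive integer, I a left ideal of M_n(D), and R ∈ M_n(D) the unique left row reduced echelon matrix with I = M_n(D)·R. If rank(R) = t, then there exists an invertible matrix P ∈ M_n(D) such that P⁻¹IP := {P⁻¹AP : A ∈ I} equals M_n(D)·E, where E ∈ M_n(D) is the diagonal matrix whose first t diagonal entries are 1 and whose remaining entries are 0; in particular E is the unique left row reduced echelon matrix associated with the left ideal P⁻¹IP. -/
open Matrix Pointwise

section MyAux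

open Matrix

/-- Existence of a linear automorphism mapping `V` onto `W` when their finranks agree. -/
lemma my_exists_equiv_map_eq {D : Type*} [DivisionRing D] {M : Type*} [AddCommGroup M]
    [Module D M] [FiniteDimensional D M] (V W : Submodule D M)
    (h : Module.finrank D V = Module.finrank D W) :
    ∃ f : M ≃ₗ[D] M, Submodule.map (f : M →ₗ[D] M) V = W := by
  obtain ⟨V', hV'⟩ := Submodule.exists_isCompl V
  obtain ⟨W', hW'⟩ := Submodule.exists_isCompl W
  have h2 : Module.finrank D V' = Module.finrank D W' := by
    have a1 := Submodule.finrank_add_eq_of_isCompl hV'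
    have a2 := Submodule.finrank_add_eq_of_isCompl hW'
    omega
  let φ : V ≃ₗ[D] W := LinearEquiv.ofFinrankEq _ _ h
  let ψ : V' ≃ₗ[D] W' := LinearEquiv.ofFinrankEq _ _ h2
  let f : M ≃ₗ[D] M :=
    (Submodule.prodEquivOfIsCompl V V' hV').symm.trans
      ((φ.prodCongr ψ).trans (Submodule.prodEquivOfIsCompl W W' hW'))
  have key : ∀ x : V, f (x : M) = (φ x : M) := by
    intro x
    show (Submodule.prodEquivOfIsCompl W W' hW')
        ((φ.prodCongr ψ) ((Submodule.prodEquivOfIsCompl V V' hV').symm (x : M))) = _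
    rw [Submodule.prodEquivOfIsCompl_symm_apply_left]
    simp [Submodule.coe_prodEquivOfIsCompl']
  refine ⟨f, le_antisymm ?_ ?_⟩
  · rintro x ⟨v, hv, rfl⟩
    rw [show (f : M →ₗ[D] M) v = f v from rfl, key ⟨v, hv⟩]
    exact (φ ⟨v, hv⟩).2
  · intro w hw
    refine ⟨(φ.symm ⟨w, hw⟩ : M), (φ.symm ⟨w, hw⟩).2, ?_⟩
    rw [show (f : M →ₗ[D] M) _ = f _ from rfl, key]
    simp

/-- `B` is a left multiple of `A` iff every row of `B` lies in the row space of `A`. -/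
lemma my_exists_left_factor_iff {D : Type*} [DivisionRing D] {n : ℕ}
    (A B : Matrix (Fin n) (Fin n) D) :
    (∃ X : Matrix (Fin n) (Fin n) D, B = X * A) ↔
      ∀ p, B p ∈ Submodule.span D (Set.range A) := by
  constructor
  · rintro ⟨X, rfl⟩ p
    refine (Submodule.mem_span_range_iff_exists_fun D).2 ?_
    refine ⟨X p, ?_⟩
    funext j
    simp [Matrix.mul_apply, Finset.sum_apply]
  · intro hp
    have hc : ∀ p, ∃ c : Fin n → D, ∑ i, c i • A i = B p := by
      intro p
      exact (Submodule.mem_span_range_iff_exists_fun D).1 (hp p)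
    choose c hcc using hc
    refine ⟨Matrix.of c, ?_⟩
    funext p j
    rw [← hcc p]
    simp [Matrix.mul_apply, Finset.sum_apply]

/-- Rows of the truncated identity diagonal matrix. -/
lemma my_E_row {D : Type*} [DivisionRing D] {n t : ℕ} (i : Fin n) :
    (Matrix.diagonal (fun i : Fin n => if (i : ℕ) < t then (1 : D) else 0)) i
      = Pi.single i (if (i : ℕ) < t then (1 : D) else 0) := by
  funext j
  rw [Matrix.diagonal_apply, Pi.single_apply]
  by_cases h : i = j
  · simp [h]
  · simp [h, Ne.symm h]

lemma my_E_rre {D : Type*} [DivisionRing D] {n t : ℕ} (htn : t ≤ n) :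
    IsRowReducedEchelon
      (Matrix.diagonal (fun i : Fin n => if (i : ℕ) < t then (1 : D) else 0)) := by
  refine ⟨t, htn, fun i => Fin.castLE htn i, ?_, ?_, ?_, ?_, ?_⟩
  · intro a b hab
    exact hab
  · intro i hi
    rw [my_E_row]
    have : ¬ ((i : ℕ) < t) := by omega
    simp [this]
  · intro i
    have : ((Fin.castLE htn i : Fin n) : ℕ) < t := i.2
    simp [Matrix.diagonal_apply_eq, this]
  · intro i j hj
    have : (Fin.castLE htn i : Fin n) ≠ j := by
      intro h
      rw [← h] at hj
      simp at hj
    exact Matrix.diagonal_apply_ne _ this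
  · intro i p hpi
    have : p ≠ (Fin.castLE htn i : Fin n) := by
      intro h
      apply hpi
      rw [h]
      rfl
    exact Matrix.diagonal_apply_ne _ this

lemma my_E_finrank {D : Type*} [DivisionRing D] {n t : ℕ} (htn : t ≤ n) :
    Module.finrank D
      (LRS (Matrix.diagonal (fun i : Fin n => if (i : ℕ) < t then (1 : D) else 0))) = t := by
  classical
  set E : Matrix (Fin n) (Fin n) D :=
    Matrix.diagonal (fun i : Fin n => if (i : ℕ) < t then (1 : D) else 0) with hE
  have hli : LinearIndependent D (fun i : Fin t => (Pi.single (Fin.castLE htn i) (1 : D) : Fin n → D)) := by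
    have h1 := (Pi.basisFun D (Fin n)).linearIndependent
    have h2 := h1.comp (Fin.castLE htn) (Fin.castLE_injective htn)
    simpa [Function.comp_def] using h2
  have hspan : Submodule.span D (Set.range E)
      = Submodule.span D (Set.range (fun i : Fin t => (Pi.single (Fin.castLE htn i) (1 : D) : Fin n → D))) := by
    apply le_antisymm <;> rw [Submodule.span_le] <;> rintro _ ⟨i, rfl⟩
    · by_cases h : (i : ℕ) < t
      · have : E i = Pi.single i (1 : D) := by rw [hE, my_E_row]; simp [h]
        rw [this]
        apply Submodule.subset_span
        exact ⟨⟨(i : ℕ), h⟩, by congr⟩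
      · have : E i = 0 := by rw [hE, my_E_row]; simp [h]
        rw [this]
        exact Submodule.zero_mem _
    · show (Pi.single (Fin.castLE htn i) (1 : D) : Fin n → D) ∈ _
      have : (Pi.single (Fin.castLE htn i) (1 : D) : Fin n → D) = E (Fin.castLE htn i) := by
        rw [hE, my_E_row]
        have : ((Fin.castLE htn i : Fin n) : ℕ) < t := i.2
        simp [this]
      rw [this]
      exact Submodule.subset_span ⟨_, rfl⟩
  rw [LRS, hspan, finrank_span_eq_card hli, Fintype.card_fin]

/-- A row of a product. -/
lemma my_mul_row {D : Type*} [DivisionRing D] {n : ℕ}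
    (A B : Matrix (Fin n) (Fin n) D) (p : Fin n) :
    (A * B) p = ∑ q, A p q • B q := by
  funext j
  simp [Matrix.mul_apply, Finset.sum_apply]

/-- Left-linear maps on row vectors are given by right matrix multiplication. -/
lemma my_row_matrix {D : Type*} [DivisionRing D] {n : ℕ}
    (g : (Fin n → D) →ₗ[D] (Fin n → D)) (A : Matrix (Fin n) (Fin n) D) (p : Fin n) :
    (A * Matrix.of fun q j => g (Pi.single q 1) j) p = g (A p) := by
  rw [my_mul_row]
  have hv : A p = ∑ q, A p q • (Pi.single q (1 : D) : Fin n → D) := by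
    conv_lhs => rw [← Finset.univ_sum_single (A p)]
    refine Finset.sum_congr rfl fun q _ => ?_
    funext j
    by_cases h : j = q <;> simp [Pi.single_apply, h]
  conv_rhs => rw [hv, map_sum]
  refine Finset.sum_congr rfl fun q _ => ?_
  rw [_root_.map_smul]
  rfl

end MyAux

/-- If `I = M_n(D)·R` is a left ideal of `M_n(D)` with `R` its unique
left row reduced echelon matrix of rank `t`, then `I` is conjugate, via some invertible
`P` (with two-sided inverse `Q = P⁻¹`), to `M_n(D)·E` where `E` is the diagonal matrix
with `t` ones followed by zeros; moreover `E` is left row reduced echelon, hence is the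
unique left row reduced echelon matrix associated with `P⁻¹IP`. -/
theorem leftIdeal_conjugate_to_diagonal
    (D : Type*) [DivisionRing D] (n : ℕ) (hn : 0 < n)
    (I : AddSubgroup (Matrix (Fin n) (Fin n) D))
    (hI : ∀ (P : Matrix (Fin n) (Fin n) D) (A : Matrix (Fin n) (Fin n) D),
      A ∈ I → P * A ∈ I)
    (R : Matrix (Fin n) (Fin n) D) (hR : IsRowReducedEchelon R)
    (hIR : (I : Set (Matrix (Fin n) (Fin n) D)) =
      Set.range (fun X : Matrix (Fin n) (Fin n) D => X * R))
    (t : ℕ) (ht : Module.finrank D (LRS R) = t) :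
    ∃ P Q : Matrix (Fin n) (Fin n) D, P * Q = 1 ∧ Q * P = 1 ∧
      IsRowReducedEchelon
        (Matrix.diagonal (fun i : Fin n => if (i : ℕ) < t then (1 : D) else 0)) ∧
      {B : Matrix (Fin n) (Fin n) D | ∃ A ∈ I, B = Q * A * P} =
        Set.range (fun X : Matrix (Fin n) (Fin n) D =>
          X * Matrix.diagonal (fun i : Fin n => if (i : ℕ) < t then (1 : D) else 0)) := by
  classical
  set E : Matrix (Fin n) (Fin n) D :=
    Matrix.diagonal (fun i : Fin n => if (i : ℕ) < t then (1 : D) else 0) with hE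
  have htn : t ≤ n := by
    have h1 : Module.finrank D (LRS R) ≤ Module.finrank D (Fin n → D) :=
      Submodule.finrank_le _
    rwa [ht, Module.finrank_pi, Fintype.card_fin] at h1
  obtain ⟨f, hf⟩ := my_exists_equiv_map_eq (LRS R) (LRS E)
    (by rw [ht, my_E_finrank htn])
  set P : Matrix (Fin n) (Fin n) D :=
    Matrix.of fun q j => f (Pi.single q 1) j with hPdef
  set Q : Matrix (Fin n) (Fin n) D :=
    Matrix.of fun q j => f.symm (Pi.single q 1) j with hQdef
  have hAP : ∀ A : Matrix (Fin n) (Fin n) D, ∀ p, (A * P) p = f (A p) := fun A p =>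
    my_row_matrix (f : (Fin n → D) →ₗ[D] (Fin n → D)) A p
  have hAQ : ∀ A : Matrix (Fin n) (Fin n) D, ∀ p, (A * Q) p = f.symm (A p) := fun A p =>
    my_row_matrix (f.symm : (Fin n → D) →ₗ[D] (Fin n → D)) A p
  have hPQ : P * Q = 1 := by
    funext i j
    have h1 : (P * Q) i = f.symm (P i) := hAQ P i
    have h2 : P i = f (Pi.single i 1) := rfl
    rw [h1, h2, LinearEquiv.symm_apply_apply]
    rw [Matrix.one_apply, Pi.single_apply]
    by_cases h : i = j <;> simp [h, Ne.symm]
  have hQP : Q * P = 1 := by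
    funext i j
    have h1 : (Q * P) i = f (Q i) := hAP Q i
    have h2 : Q i = f.symm (Pi.single i 1) := rfl
    rw [h1, h2, LinearEquiv.apply_symm_apply]
    rw [Matrix.one_apply, Pi.single_apply]
    by_cases h : i = j <;> simp [h, Ne.symm]
  have hmem : ∀ A : Matrix (Fin n) (Fin n) D, A ∈ I ↔ ∀ p, A p ∈ LRS R := by
    intro A
    have : A ∈ I ↔ A ∈ (I : Set (Matrix (Fin n) (Fin n) D)) := Iff.rfl
    rw [this, hIR, Set.mem_range]
    rw [show (∃ X, X * R = A) ↔ ∃ X, A = X * R from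
      ⟨fun ⟨X, h⟩ => ⟨X, h.symm⟩, fun ⟨X, h⟩ => ⟨X, h.symm⟩⟩]
    exact my_exists_left_factor_iff R A
  have hmapiff : ∀ v : Fin n → D, v ∈ LRS R ↔ f v ∈ LRS E := by
    intro v
    constructor
    · intro hv
      rw [← hf]
      exact ⟨v, hv, rfl⟩
    · intro hv
      rw [← hf] at hv
      obtain ⟨w, hw, hwv⟩ := hv
      have : w = v := f.injective hwv
      rwa [← this]
  refine ⟨P, Q, hPQ, hQP, my_E_rre htn, ?_⟩
  ext B
  simp only [Set.mem_setOf_eq, Set.mem_range]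
  constructor
  · rintro ⟨A, hA, rfl⟩
    have hA' := (hmem A).1 hA
    have hrows : ∀ p, (Q * A * P) p ∈ LRS E := by
      intro p
      rw [hAP (Q * A) p]
      rw [← hmapiff]
      rw [my_mul_row]
      exact Submodule.sum_mem _ fun q _ => Submodule.smul_mem _ _ (hA' q)
    obtain ⟨X, hX⟩ := (my_exists_left_factor_iff E (Q * A * P)).2 hrows
    exact ⟨X, hX.symm⟩
  · rintro ⟨X, rfl⟩
    have hBrows : ∀ p, (X * E) p ∈ LRS E := by
      intro p
      rw [my_mul_row]
      exact Submodule.sum_mem _ fun q _ =>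
        Submodule.smul_mem _ _ (Submodule.subset_span ⟨q, rfl⟩)
    refine ⟨P * (X * E) * Q, ?_, ?_⟩
    · apply (hmem _).2
      intro p
      rw [hAQ (P * (X * E)) p]
      have h1 : (P * (X * E)) p ∈ LRS E := by
        rw [my_mul_row]
        exact Submodule.sum_mem _ fun q _ => Submodule.smul_mem _ _ (hBrows q)
      rw [hmapiff, LinearEquiv.apply_symm_apply]
      exact h1
    · rw [Matrix.mul_assoc Q, Matrix.mul_assoc (P * (X * E)) Q P, hQP, Matrix.mul_one,
        ← Matrix.mul_assoc Q P, hQP, Matrix.one_mul]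
end

section
/- Let D be a division ring and M = (m_1,…,m_r), N = (n_1,…,n_s) partitions of m and n. Let (R_1,…,R_r) be any sequence of matrices in M_n(D) such that LRS(R_{i+1}) ⊆ LRS(R_i) for all 1 ≤ i < r and, for each i, the j-th block column of R_i (columns partitioned according to N) is zero for all j < i. Then the set J := {A ∈ M_{m×n}(D) : Row_i(A) ∈ M_{m_i×n}(D)·R_i for every 1 ≤ i ≤ r} is contained in T_{(M,N)}(D) and is a left submodule of T_{(M,N)}(D), i.e., an additive subgroup with T_M·J ⊆ J. -/
open Matrix Pointwise

section Aux
variable {D : Type*}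

theorem blockStart_mono {r : ℕ} (M : Fin r → ℕ) {i j : Fin r} (h : i < j) :
    blockStart M i + M i ≤ blockStart M j := by
  have hins : i ∉ Finset.Iio i := by simp
  have hsub : insert i (Finset.Iio i) ⊆ Finset.Iio j := by
    intro t ht
    simp only [Finset.mem_insert, Finset.mem_Iio] at ht ⊢
    rcases ht with h1 | h1
    · simpa [h1]
    · exact lt_trans h1 h
  calc blockStart M i + M i = ∑ t ∈ insert i (Finset.Iio i), M t := by
        rw [Finset.sum_insert hins, blockStart, add_comm]
    _ ≤ _ := Finset.sum_le_sum_of_subset hsub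

theorem blockIdx_bijective {r : ℕ} (M : Fin r → ℕ) :
    Function.Bijective (fun p : Σ j : Fin r, Fin (M j) => blockIdx M p.1 p.2) := by
  have hinj : Function.Injective (fun p : Σ j : Fin r, Fin (M j) => blockIdx M p.1 p.2) := by
    rintro ⟨i, a⟩ ⟨j, b⟩ h
    simp only [blockIdx, Fin.mk.injEq] at h
    have hij : i = j := by
      by_contra hne
      rcases lt_or_gt_of_ne hne with hlt | hlt
      · have := blockStart_mono M hlt; have := a.2; omega
      · have := blockStart_mono M hlt; have := b.2; omega
    subst hij
    congr 1
    exact Fin.ext (by omega)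
  refine ⟨hinj, ?_⟩
  have hcard : Fintype.card (Σ j : Fin r, Fin (M j)) = Fintype.card (Fin (∑ t, M t)) := by
    simp [Fintype.card_sigma]
  exact (Fintype.bijective_iff_injective_and_card _).mpr ⟨hinj, hcard⟩ |>.2

theorem sum_blocks [AddCommMonoid D] {r : ℕ} (M : Fin r → ℕ)
    (f : Fin (∑ t, M t) → D) :
    ∑ p, f p = ∑ j : Fin r, ∑ b : Fin (M j), f (blockIdx M j b) := by
  have h := Fintype.sum_bijective _ (blockIdx_bijective M)
    (fun p : Σ j : Fin r, Fin (M j) => f (blockIdx M p.1 p.2)) f (fun _ => rfl)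
  rw [← h, Finset.sum_sigma']
  rfl

theorem factor_of_LRS_le [DivisionRing D] {m m' n : ℕ}
    (A : Matrix (Fin m') (Fin n) D) (B : Matrix (Fin m) (Fin n) D)
    (h : LRS A ≤ LRS B) : ∃ Z : Matrix (Fin m') (Fin m) D, A = Z * B := by
  have hrow : ∀ p : Fin m', ∃ c : Fin m → D, ∑ q, c q • B q = A p := by
    intro p
    have hp : A p ∈ LRS B := h (Submodule.subset_span ⟨p, rfl⟩)
    exact (Submodule.mem_span_range_iff_exists_fun D).mp hp
  choose c hc using hrow
  refine ⟨fun p q => c p q, ?_⟩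
  funext p j
  have := congrFun (hc p) j
  simp only [Finset.sum_apply, Pi.smul_apply, smul_eq_mul] at this
  rw [← this]; exact Matrix.mul_apply.symm

end Aux

/-- Conversely, any sequence `(R_1, …, R_r)` of matrices in `M_n(D)`
with decreasing row spaces and `j`-th block columns zero for `j < i` determines the set
`J = {A : Row_i(A) ∈ M_{m_i×n}(D)·R_i for all i}`, which is contained in `T_{(M,N)}(D)`
and is a left submodule of it. -/



theorem echelon_seq_determines_leftSubmodule
    (D : Type*) [DivisionRing D] (r s : ℕ) (M : Fin r → ℕ) (N : Fin s → ℕ)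
    (hM : ∀ i, 0 < M i) (hN : ∀ j, 0 < N j)
    (R : Fin r → Matrix (Fin (∑ t, N t)) (Fin (∑ t, N t)) D)
    (hdesc : ∀ (i : Fin r) (hi : (i : ℕ) + 1 < r), LRS (R ⟨(i : ℕ) + 1, hi⟩) ≤ LRS (R i))
    (hblk : ∀ (i : Fin r) (j : Fin s), (j : ℕ) < (i : ℕ) →
      ∀ (p : Fin (∑ t, N t)) (b : Fin (N j)), R i p (blockIdx N j b) = 0)
    (J : Set (Matrix (Fin (∑ t, M t)) (Fin (∑ t, N t)) D))
    (hJdef : J = {A | ∀ i : Fin r, ∃ X : Matrix (Fin (M i)) (Fin (∑ t, N t)) D,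
      blockRow M A i = X * R i}) :
    (∀ A ∈ J, IsNest M N A) ∧
    (0 : Matrix (Fin (∑ t, M t)) (Fin (∑ t, N t)) D) ∈ J ∧
    (∀ A ∈ J, ∀ B ∈ J, A + B ∈ J) ∧
    (∀ A ∈ J, -A ∈ J) ∧
    (∀ (P : Matrix (Fin (∑ t, M t)) (Fin (∑ t, M t)) D),
      IsNest M M P → ∀ A ∈ J, P * A ∈ J) := by
  subst hJdef
  have chain : ∀ i j : Fin r, i ≤ j → LRS (R j) ≤ LRS (R i) := by
    have key : ∀ d : ℕ, ∀ i j : Fin r, (j : ℕ) = (i : ℕ) + d → LRS (R j) ≤ LRS (R i) := by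
      intro d
      induction d with
      | zero =>
        intro i j hij
        have : i = j := Fin.ext (by omega)
        subst this; exact le_refl _
      | succ d ih =>
        intro i j hij
        have hjd : (i : ℕ) + d < r := by have := j.2; omega
        have h1 : ((i : ℕ) + d) + 1 < r := by have := j.2; omega
        have hjeq : j = ⟨(i : ℕ) + d + 1, h1⟩ := Fin.ext (by simp; omega)
        calc LRS (R j) = LRS (R ⟨(i : ℕ) + d + 1, h1⟩) := by rw [hjeq]
          _ ≤ LRS (R ⟨(i : ℕ) + d, hjd⟩) := hdesc ⟨(i : ℕ) + d, hjd⟩ h1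
          _ ≤ LRS (R i) := ih i ⟨(i : ℕ) + d, hjd⟩ rfl
    intro i j hij
    exact key ((j : ℕ) - (i : ℕ)) i j (by omega)
  refine ⟨?_, ?_, ?_, ?_, ?_⟩
  · -- contained in nest module
    intro A hA i j a b hji
    obtain ⟨X, hX⟩ := hA i
    have h1 : A (blockIdx M i a) (blockIdx N j b) = blockRow M A i a (blockIdx N j b) := rfl
    rw [h1, hX, Matrix.mul_apply]
    exact Finset.sum_eq_zero fun p _ => by rw [hblk i j hji p b, mul_zero]
  · -- zero
    intro i
    refine ⟨0, ?_⟩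
    funext a q
    simp [blockRow, Matrix.mul_apply]
  · -- add
    intro A hA B hB i
    obtain ⟨X, hX⟩ := hA i
    obtain ⟨Y, hY⟩ := hB i
    refine ⟨X + Y, ?_⟩
    have h1 : blockRow M (A + B) i = blockRow M A i + blockRow M B i := rfl
    rw [h1, hX, hY, Matrix.add_mul]
  · -- neg
    intro A hA i
    obtain ⟨X, hX⟩ := hA i
    refine ⟨-X, ?_⟩
    have h1 : blockRow M (-A) i = -(blockRow M A i) := rfl
    rw [h1, hX, Matrix.neg_mul]
  · -- left multiplication
    intro P hP A hA i
    choose X hX using hA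
    choose Z hZ using fun (j : Fin r) (hj : i ≤ j) => factor_of_LRS_le (R j) (R i) (chain i j hj)
    set Pblk : ∀ j : Fin r, Matrix (Fin (M i)) (Fin (M j)) D :=
      fun j a b => P (blockIdx M i a) (blockIdx M j b) with hPblk
    set W : Fin r → Matrix (Fin (M i)) (Fin (∑ t, N t)) D :=
      fun j => if h : i ≤ j then Pblk j * X j * Z j h else 0 with hW
    refine ⟨∑ j, W j, ?_⟩
    have key : ∀ j, W j * R i = Pblk j * blockRow M A j := by
      intro j
      by_cases h : i ≤ j
      · rw [hW]
        simp only [dif_pos h]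
        rw [Matrix.mul_assoc, ← hZ j h, Matrix.mul_assoc, ← hX j]
      · have hji : (j : ℕ) < (i : ℕ) := lt_of_not_ge h
        have hP0 : Pblk j = 0 := by
          funext a b
          exact hP i j a b hji
        simp [hW, dif_neg h, hP0]
    funext a q
    calc blockRow M (P * A) i a q = ∑ p, P (blockIdx M i a) p * A p q := by
          rw [blockRow]; exact Matrix.mul_apply
      _ = ∑ j : Fin r, ∑ b : Fin (M j),
            P (blockIdx M i a) (blockIdx M j b) * A (blockIdx M j b) q :=
          sum_blocks M _
      _ = ∑ j : Fin r, (Pblk j * blockRow M A j) a q := by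
          refine Finset.sum_congr rfl fun j _ => ?_
          rw [Matrix.mul_apply]
          rfl
      _ = ∑ j : Fin r, (W j * R i) a q := by
          refine Finset.sum_congr rfl fun j _ => ?_
          rw [key j]
      _ = ((∑ j, W j) * R i) a q := by
          rw [Matrix.sum_mul]
          exact (Matrix.sum_apply a q _ _).symm
end

section
/- Let D be a division ring, m, n positive integers, I a left submodule of M_{m×n}(D), R ∈ M_n(D) the unique left row reduced echelon matrix with I = M_{m×n}(D)·R, and A ∈ M_{m×n}(D). Then I = M_m(D)·A := {P·A : P ∈ M_m(D)} if and only if LRS(R) = LRS(A). -/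
open Matrix Pointwise

lemma row_mul_mem_lrs {D : Type*} [DivisionRing D] {m k n : ℕ}
    (A : Matrix (Fin k) (Fin n) D) (P : Matrix (Fin m) (Fin k) D) (i : Fin m) :
    (P * A) i ∈ LRS A := by
  rw [LRS]; refine (Submodule.mem_span_range_iff_exists_fun D).mpr ?_
  refine ⟨P i, ?_⟩
  ext q
  simp [Matrix.mul_apply, Finset.sum_apply]

lemma exists_left_factor_of_rows_mem {D : Type*} [DivisionRing D] {m k n : ℕ}
    (A : Matrix (Fin k) (Fin n) D) (B : Matrix (Fin m) (Fin n) D)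
    (h : ∀ i, B i ∈ LRS A) : ∃ P : Matrix (Fin m) (Fin k) D, B = P * A := by
  have h' : ∀ i, ∃ c : Fin k → D, ∑ j, c j • A j = B i := by
    intro i
    exact (Submodule.mem_span_range_iff_exists_fun D).mp (h i)
  choose c hc using h'
  refine ⟨Matrix.of c, ?_⟩
  ext i q
  rw [Matrix.mul_apply]
  have := congrFun (hc i) q
  simpa [Finset.sum_apply] using this.symm

/-- If `I = M_{m×n}(D)·R` is a left submodule with `R` its unique left
row reduced echelon matrix, and `A ∈ M_{m×n}(D)`, then `I = M_m(D)·A` iff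
`LRS(R) = LRS(A)`. -/
theorem leftSubmodule_eq_principal_iff_lrs_eq
    (D : Type*) [DivisionRing D] (m n : ℕ) (hm : 0 < m) (hn : 0 < n)
    (I : AddSubgroup (Matrix (Fin m) (Fin n) D))
    (hI : ∀ (P : Matrix (Fin m) (Fin m) D) (B : Matrix (Fin m) (Fin n) D),
      B ∈ I → P * B ∈ I)
    (R : Matrix (Fin n) (Fin n) D) (hR : IsRowReducedEchelon R)
    (hIR : (I : Set (Matrix (Fin m) (Fin n) D)) =
      Set.range (fun X : Matrix (Fin m) (Fin n) D => X * R))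
    (A : Matrix (Fin m) (Fin n) D) :
    (I : Set (Matrix (Fin m) (Fin n) D)) =
        Set.range (fun P : Matrix (Fin m) (Fin m) D => P * A) ↔
      LRS R = LRS A := by
  have key : ∀ (C : Matrix (Fin n) (Fin n) D),
      Set.range (fun X : Matrix (Fin m) (Fin n) D => X * C)
        = {B : Matrix (Fin m) (Fin n) D | ∀ i, B i ∈ LRS C} := by
    intro C
    ext B
    constructor
    · rintro ⟨X, rfl⟩
      exact fun i => row_mul_mem_lrs C X i
    · intro h
      obtain ⟨P, rfl⟩ := exists_left_factor_of_rows_mem C B h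
      exact ⟨P, rfl⟩
  have keyA : Set.range (fun P : Matrix (Fin m) (Fin m) D => P * A)
      = {B : Matrix (Fin m) (Fin n) D | ∀ i, B i ∈ LRS A} := by
    ext B
    constructor
    · rintro ⟨X, rfl⟩
      exact fun i => row_mul_mem_lrs A X i
    · intro h
      obtain ⟨P, rfl⟩ := exists_left_factor_of_rows_mem A B h
      exact ⟨P, rfl⟩
  rw [hIR, key R, keyA]
  constructor
  · intro h
    apply le_antisymm
    · intro v hv
      have hmem := (Set.ext_iff.mp h (fun _ : Fin m => v)).mp (fun _ => hv)
      exact hmem ⟨0, hm⟩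
    · intro v hv
      have hmem := (Set.ext_iff.mp h (fun _ : Fin m => v)).mpr (fun _ => hv)
      exact hmem ⟨0, hm⟩
  · intro h
    rw [h]
end

section
/- Let D be a division ring, m, n positive integers, T_{m×n}(D) the set of upper triangular m×n matrices over D, and T_m(D) the ring of upper triangular m×m matrices over D. Let J be a left submodule of T_{m×n}(D) (an additive subgroup with T_m(D)·J ⊆ J) and A ∈ T_{m×n}(D). Then J = T_m(D)·A := {P·A : P ∈ T_m(D)} if and only if for each 1 ≤ i ≤ m, the set row_i(J) := {row_i(X) : X ∈ J} equals the left D-span of {row_k(A) : i ≤ k ≤ m} in M_{1×n}(D). -/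
open Matrix Pointwise

private lemma row_mul_eq_sum {D : Type*} [DivisionRing D] {m n : ℕ}
    (P : Matrix (Fin m) (Fin m) D) (A : Matrix (Fin m) (Fin n) D) (i : Fin m) :
    (P * A) i = ∑ q : Fin m, P i q • A q := by
  funext j
  simp [Matrix.mul_apply, Finset.sum_apply]

private lemma exists_ut_row_iff {D : Type*} [DivisionRing D] {m n : ℕ}
    (A : Matrix (Fin m) (Fin n) D) (i : Fin m) (v : Fin n → D) :
    (∃ P : Matrix (Fin m) (Fin m) D, _root_.IsUpperTriangular P ∧ v = (P * A) i) ↔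
      v ∈ Submodule.span D {w : Fin n → D | ∃ k : Fin m, i ≤ k ∧ w = A k} := by
  constructor
  · rintro ⟨P, hP, rfl⟩
    rw [row_mul_eq_sum]
    refine Submodule.sum_mem _ fun q _ => ?_
    by_cases h : i ≤ q
    · exact Submodule.smul_mem _ _ (Submodule.subset_span ⟨q, h, rfl⟩)
    · rw [hP i q (Fin.lt_def.mp (not_le.mp h)), zero_smul]
      exact Submodule.zero_mem _
  · intro hv
    have hc : ∃ c : Fin m → D, (∀ q : Fin m, ¬ i ≤ q → c q = 0) ∧ v = ∑ q, c q • A q := by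
      induction hv using Submodule.span_induction with
      | mem x hx =>
        obtain ⟨k, hik, rfl⟩ := hx
        refine ⟨fun q => if q = k then 1 else 0, fun q hq => ?_, ?_⟩
        · dsimp only
          rw [if_neg]; rintro rfl; exact hq hik
        · simp [ite_smul]
          rw [Finset.sum_eq_single k (fun b _ hb => by simp [hb]) (by simp)]; simp
      | zero => exact ⟨0, fun _ _ => rfl, by simp⟩
      | add x y _ _ hx hy =>
        obtain ⟨c, hc0, rfl⟩ := hx
        obtain ⟨d, hd0, rfl⟩ := hy
        exact ⟨c + d, fun q hq => by simp [hc0 q hq, hd0 q hq],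
          by simp [add_smul, Finset.sum_add_distrib]⟩
      | smul a x _ hx =>
        obtain ⟨c, hc0, rfl⟩ := hx
        exact ⟨a • c, fun q hq => by simp [hc0 q hq], by simp [Finset.smul_sum, smul_smul]⟩
    obtain ⟨c, hc0, rfl⟩ := hc
    refine ⟨fun p q => if p = i then c q else 0, ?_, ?_⟩
    · intro p q hqp
      by_cases hp : p = i
      · subst hp
        simp only [if_pos rfl]
        exact hc0 q (fun hle => by have := Fin.le_def.mp hle; omega)
      · simp [hp]
    · rw [row_mul_eq_sum ((fun p q => if p = i then c q else 0 : Matrix (Fin m) (Fin m) D))]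
      simp


/-- Let `J` be a left submodule of the upper triangular matrices
`T_{m×n}(D)` and `A ∈ T_{m×n}(D)`. Then `J = T_m(D)·A` iff for every `i`, the set
`row_i(J)` equals the left `D`-span of the rows `row_k(A)` with `k ≥ i`. -/
theorem leftSubmodule_upperTriangular_eq_principal_iff
    (D : Type*) [DivisionRing D] (m n : ℕ) (hm : 0 < m) (hn : 0 < n)
    (J : AddSubgroup (Matrix (Fin m) (Fin n) D))
    (hJT : ∀ A ∈ J, IsUpperTriangular A)
    (hJ : ∀ (P : Matrix (Fin m) (Fin m) D) (B : Matrix (Fin m) (Fin n) D),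
      _root_.IsUpperTriangular P → B ∈ J → P * B ∈ J)
    (A : Matrix (Fin m) (Fin n) D) (hA : IsUpperTriangular A) :
    (J : Set (Matrix (Fin m) (Fin n) D)) =
        {B | ∃ P : Matrix (Fin m) (Fin m) D, _root_.IsUpperTriangular P ∧ B = P * A} ↔
      ∀ i : Fin m, {v : Fin n → D | ∃ X ∈ J, X i = v} =
        ↑(Submodule.span D {v : Fin n → D | ∃ k : Fin m, i ≤ k ∧ v = A k}) := by
  constructor
  · intro h i
    ext v
    simp only [Set.mem_setOf_eq, SetLike.mem_coe]
    constructor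
    · rintro ⟨X, hXJ, rfl⟩
      have hX : X ∈ {B | ∃ P : Matrix (Fin m) (Fin m) D, _root_.IsUpperTriangular P ∧ B = P * A} :=
        h ▸ hXJ
      obtain ⟨P, hP, rfl⟩ := hX
      exact (exists_ut_row_iff A i _).mp ⟨P, hP, rfl⟩
    · intro hv
      obtain ⟨P, hP, rfl⟩ := (exists_ut_row_iff A i v).mpr hv
      refine ⟨P * A, ?_, rfl⟩
      have hmem : P * A ∈ {B | ∃ Q : Matrix (Fin m) (Fin m) D, _root_.IsUpperTriangular Q ∧ B = Q * A} :=
        ⟨P, hP, rfl⟩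
      rw [← h] at hmem
      exact hmem
  · intro h
    have hAmem : A ∈ J := by
      have hrow : ∀ i : Fin m, ∃ X, X ∈ J ∧ X i = A i := by
        intro i
        have hAi : A i ∈ {v : Fin n → D | ∃ X ∈ J, X i = v} := by
          rw [h i]
          exact Submodule.subset_span ⟨i, le_refl i, rfl⟩
        obtain ⟨X, hX, hXi⟩ := hAi
        exact ⟨X, hX, hXi⟩
      choose X hXJ hXi using hrow
      have key : A = ∑ i : Fin m, Matrix.of (fun p q => if p = i ∧ q = i then (1:D) else 0) * X i := by
        funext p j
        rw [Matrix.sum_apply]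
        have hterm : ∀ i : Fin m,
            (Matrix.of (fun p q => if p = i ∧ q = i then (1:D) else 0) * X i : Matrix _ _ D) p j
              = if p = i then A p j else 0 := by
          intro i
          rw [Matrix.mul_apply]
          by_cases hp : p = i
          · subst hp
            simp only [true_and, if_pos rfl]
            rw [Finset.sum_eq_single p]
            · simp [← congrFun (hXi p) j]
            · intro q _ hq; simp [hq]
            · simp
          · simp [hp]
        simp [hterm]
      rw [key]
      refine AddSubgroup.sum_mem J fun i _ => hJ _ _ ?_ (hXJ i)
      intro p q hqp
      by_cases hp : p = i ∧ q = i
      · obtain ⟨rfl, rfl⟩ := hp; omega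
      · simp [hp]
    ext B
    simp only [Set.mem_setOf_eq, SetLike.mem_coe]
    constructor
    · intro hB
      have hrows : ∀ p : Fin m, ∃ P : Matrix (Fin m) (Fin m) D,
          _root_.IsUpperTriangular P ∧ B p = (P * A) p :=
        fun p => (exists_ut_row_iff A p (B p)).mpr (by
          have hBp : B p ∈ {v : Fin n → D | ∃ X ∈ J, X p = v} := ⟨B, hB, rfl⟩
          rw [h p] at hBp
          exact hBp)
      choose P hPut hPr using hrows
      refine ⟨Matrix.of (fun p q => P p p q), fun p q hpq => hPut p p q hpq, ?_⟩
      funext p j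
      have heq : (Matrix.of (fun p q => P p p q) * A) p j = (P p * A) p j := by
        simp [Matrix.mul_apply]
      rw [heq, ← hPr p]
    · rintro ⟨P, hP, rfl⟩
      exact hJ P A hP hAmem
end

section
/- Let D be a division ring, M = (m_1,…,m_r), N = (n_1,…,n_s) partitions of m and n, and J a nonzero left submodule of T_{(M,N)}(D) with associated unique sequence (R_1,…,R_r) of left row reduced echelon matrices. Let 1 ≤ k ≤ r be the largest index with R_k ≠ 0, and set R_{k+1} := 0 if k = r. Then J is principal as a left submodule (i.e., J = T_M·A := {P·A : P ∈ T_M} for some A ∈ T_{(M,N)}(D)) if and only if rank(R_i) − rank(R_{i+1}) ≤ m_i for every 1 ≤ i ≤ k. -/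
open Matrix Pointwise

/-! ### Auxiliary lemmas -/

namespace NestPrincipalAux

theorem blockStart_mono {r : ℕ} (M : Fin r → ℕ) {i j : Fin r} (h : i ≤ j) :
    blockStart M i ≤ blockStart M j :=
  Finset.sum_le_sum_of_subset (fun t ht => by
    simp only [Finset.mem_Iio] at *; exact lt_of_lt_of_le ht h)

theorem blockStart_add_le {r : ℕ} (M : Fin r → ℕ) {i j : Fin r} (h : i < j) :
    blockStart M i + M i ≤ blockStart M j := by
  have hins : i ∉ Finset.Iio i := by simp
  have hsub : insert i (Finset.Iio i) ⊆ Finset.Iio j := by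
    intro t ht
    simp only [Finset.mem_insert, Finset.mem_Iio] at *
    rcases ht with h1 | h1
    · exact h1 ▸ h
    · exact lt_trans h1 h
  calc blockStart M i + M i = ∑ t ∈ insert i (Finset.Iio i), M t := by
        rw [Finset.sum_insert hins, blockStart, add_comm]
    _ ≤ _ := Finset.sum_le_sum_of_subset hsub

theorem blockStart_succ {r : ℕ} (M : Fin r → ℕ) (i : Fin r) (h1 : (i : ℕ) + 1 < r) :
    blockStart M ⟨(i : ℕ) + 1, h1⟩ = blockStart M i + M i := by
  have hins : i ∉ Finset.Iio i := by simp
  have hIio : Finset.Iio (⟨(i : ℕ) + 1, h1⟩ : Fin r) = insert i (Finset.Iio i) := by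
    ext t
    simp only [Finset.mem_Iio, Finset.mem_insert, Fin.lt_def]
    constructor
    · intro ht
      rcases Nat.lt_succ_iff_lt_or_eq.mp ht with h | h
      · right; exact Fin.lt_def.mpr h
      · left; exact Fin.ext h
    · intro ht
      rcases ht with h | h
      · subst h; omega
      · have := Fin.lt_def.mp h; omega
  rw [blockStart, hIio, Finset.sum_insert hins, blockStart, add_comm]

theorem blockStart_last {r : ℕ} (M : Fin r → ℕ) (i : Fin r) (h1 : ¬ ((i : ℕ) + 1 < r)) :
    ∑ t, M t = blockStart M i + M i := by
  have huniv : (Finset.univ : Finset (Fin r)) = insert i (Finset.Iio i) := by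
    ext t
    simp only [Finset.mem_univ, Finset.mem_insert, Finset.mem_Iio, true_iff]
    have h3 : (t : ℕ) < r := t.2
    have h4 : (t : ℕ) ≤ (i : ℕ) := by omega
    rcases lt_or_eq_of_le h4 with h2 | h2
    · right; exact Fin.lt_def.mpr h2
    · left; exact Fin.ext h2
  rw [huniv, Finset.sum_insert (by simp), blockStart, add_comm]

theorem blockIdx_lt {r : ℕ} (M : Fin r → ℕ) {i j : Fin r} (h : j < i)
    (a : Fin (M i)) (b : Fin (M j)) :
    ((blockIdx M j b : Fin (∑ t, M t)) : ℕ) < (blockIdx M i a : ℕ) := by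
  have h1 : blockStart M j + M j ≤ blockStart M i := blockStart_add_le M h
  have h2 : (b : ℕ) < M j := b.2
  simp only [blockIdx]
  omega

theorem exists_blockIdx {r : ℕ} (M : Fin r → ℕ) (q : Fin (∑ t, M t)) :
    ∃ (i : Fin r) (a : Fin (M i)), q = blockIdx M i a := by
  have hq := q.2
  have hr : 0 < r := by
    by_contra h
    push_neg at h
    interval_cases r
    · simp at hq
  classical
  set S : Finset (Fin r) := Finset.univ.filter (fun i => blockStart M i ≤ (q : ℕ)) with hS
  have hS0 : (⟨0, hr⟩ : Fin r) ∈ S := by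
    simp only [hS, Finset.mem_filter, Finset.mem_univ, true_and]
    have : blockStart M ⟨0, hr⟩ = 0 := by
      have he : Finset.Iio (⟨0, hr⟩ : Fin r) = ∅ := by
        ext t; simp [Fin.lt_def]
      rw [blockStart, he, Finset.sum_empty]
    omega
  have hSne : S.Nonempty := ⟨_, hS0⟩
  set i := S.max' hSne with hi
  have hile : blockStart M i ≤ (q : ℕ) := by
    have := S.max'_mem hSne
    simp only [hS, Finset.mem_filter] at this
    exact this.2
  have hlt : (q : ℕ) < blockStart M i + M i := by
    by_contra hcon
    push_neg at hcon
    by_cases h1 : (i : ℕ) + 1 < r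
    · have hmem : (⟨(i : ℕ) + 1, h1⟩ : Fin r) ∈ S := by
        simp only [hS, Finset.mem_filter, Finset.mem_univ, true_and]
        have := blockStart_succ M i h1
        omega
      have := S.le_max' _ hmem
      rw [← hi] at this
      simp [Fin.le_def] at this
    · have := blockStart_last M i h1
      omega
  refine ⟨i, ⟨(q : ℕ) - blockStart M i, by omega⟩, ?_⟩
  apply Fin.ext
  simp [blockIdx]
  omega

theorem row_eq_sum_smul {D : Type*} [DivisionRing D] {m n : ℕ}
    (P : Matrix (Fin m) (Fin m) D) (A : Matrix (Fin m) (Fin n) D) (p0 : Fin m) :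
    (P * A) p0 = ∑ p, P p0 p • A p := by
  funext q
  simp [Matrix.mul_apply, Finset.sum_apply]

theorem mem_span_image_iff_coeffs {D : Type*} [DivisionRing D] {m n : ℕ}
    (A : Matrix (Fin m) (Fin n) D) (S : Set (Fin m)) (v : Fin n → D) :
    v ∈ Submodule.span D (A '' S) ↔
      ∃ c : Fin m → D, (∀ p, p ∉ S → c p = 0) ∧ v = ∑ p, c p • A p := by
  classical
  constructor
  · intro hv
    have himg : A '' S = Set.range (fun p : S => A p) := by
      ext w; simp [Set.mem_image, Set.mem_range]; exact Iff.rfl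
    rw [himg] at hv
    obtain ⟨c, hc⟩ := (Submodule.mem_span_range_iff_exists_fun (R := D)).mp hv
    refine ⟨fun p => if h : p ∈ S then c ⟨p, h⟩ else 0, fun p hp => by simp [hp], ?_⟩
    rw [← hc]
    calc ∑ i : S, c i • A i
        = ∑ p : {x // x ∈ S}, (if h : (p : Fin m) ∈ S then c ⟨p, h⟩ else 0) • A p := by
          apply Finset.sum_congr rfl
          intro x _
          rw [dif_pos x.2]
      _ = ∑ p ∈ Finset.univ.filter (fun x => x ∈ S),
            (if h : p ∈ S then c ⟨p, h⟩ else 0) • A p :=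
          (Finset.sum_subtype (Finset.univ.filter (fun x => x ∈ S))
            (fun x => by simp)
            (fun p => (if h : p ∈ S then c ⟨p, h⟩ else 0) • A p)).symm
      _ = ∑ p : Fin m, (if h : p ∈ S then c ⟨p, h⟩ else 0) • A p := by
          apply Finset.sum_filter_of_ne
          intro x _ hx
          by_contra h
          rw [dif_neg h, zero_smul] at hx
          exact hx rfl
  · rintro ⟨c, hc0, rfl⟩
    apply Submodule.sum_mem
    intro p _
    by_cases hp : p ∈ S
    · exact Submodule.smul_mem _ _ (Submodule.subset_span ⟨p, hp, rfl⟩)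
    · rw [hc0 p hp, zero_smul]; exact Submodule.zero_mem _

theorem mem_LRS_iff {D : Type*} [DivisionRing D] {n : ℕ} (R : Matrix (Fin n) (Fin n) D)
    (v : Fin n → D) : v ∈ LRS R ↔ ∃ c : Fin n → D, v = c ᵥ* R := by
  rw [LRS]
  change v ∈ Submodule.span D (Set.range R.row) ↔ _
  rw [← range_vecMulLinear]
  constructor
  · rintro ⟨c, rfl⟩; exact ⟨c, rfl⟩
  · rintro ⟨c, rfl⟩; exact ⟨c, rfl⟩

theorem exists_complement_family {K V : Type*} [DivisionRing K] [AddCommGroup V] [Module K V]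
    [FiniteDimensional K V] (W U : Submodule K V) (h : W ≤ U) :
    ∃ (d : ℕ) (f : Fin d → V),
      d = Module.finrank K U - Module.finrank K W ∧
      (∀ a, f a ∈ U) ∧ W ⊔ Submodule.span K (Set.range f) = U := by
  classical
  set W' : Submodule K U := W.comap U.subtype with hW'
  obtain ⟨C, hC⟩ := W'.exists_isCompl
  have hWU : Module.finrank K W' = Module.finrank K W :=
    (Submodule.comapSubtypeEquivOfLe h).finrank_eq
  have hsum : Module.finrank K W' + Module.finrank K C = Module.finrank K U :=
    Submodule.finrank_add_eq_of_isCompl hC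
  let b : Module.Basis (Fin (Module.finrank K C)) K C := Module.finBasis K C
  refine ⟨Module.finrank K C, fun a => ((b a : U) : V), by omega, fun a => (b a : U).2, ?_⟩
  have hspan : Submodule.span K (Set.range fun a => ((b a : U) : V)) =
      Submodule.map U.subtype C := by
    have h1 : (Set.range fun a => ((b a : U) : V)) = (U.subtype ∘ₗ C.subtype) '' Set.range b := by
      rw [← Set.range_comp]; rfl
    rw [h1, ← Submodule.map_span, b.span_eq, Submodule.map_top, LinearMap.range_comp,
      Submodule.range_subtype]
  rw [hspan]
  have hmapW : Submodule.map U.subtype W' = W := by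
    rw [hW', Submodule.map_comap_subtype]
    exact inf_eq_right.mpr h
  calc W ⊔ Submodule.map U.subtype C
      = Submodule.map U.subtype W' ⊔ Submodule.map U.subtype C := by rw [hmapW]
    _ = Submodule.map U.subtype (W' ⊔ C) := (Submodule.map_sup _ _ _).symm
    _ = Submodule.map U.subtype ⊤ := by rw [hC.sup_eq_top]
    _ = U := by rw [Submodule.map_top, Submodule.range_subtype]

end NestPrincipalAux

open NestPrincipalAux

theorem leftSubmodule_nest_principal_iff_rank_cond
    (D : Type*) [DivisionRing D] (r s : ℕ) (M : Fin r → ℕ) (N : Fin s → ℕ)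
    (hM : ∀ i, 0 < M i) (hN : ∀ j, 0 < N j)
    (J : AddSubgroup (Matrix (Fin (∑ t, M t)) (Fin (∑ t, N t)) D))
    (hJne : J ≠ ⊥)
    (hJT : ∀ A ∈ J, IsNest M N A)
    (hJ : ∀ (P : Matrix (Fin (∑ t, M t)) (Fin (∑ t, M t)) D)
      (A : Matrix (Fin (∑ t, M t)) (Fin (∑ t, N t)) D),
      IsNest M M P → A ∈ J → P * A ∈ J)
    (R : Fin r → Matrix (Fin (∑ t, N t)) (Fin (∑ t, N t)) D)
    (hRE : ∀ i, IsRowReducedEchelon (R i))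
    (hdesc : ∀ (i : Fin r) (hi : (i : ℕ) + 1 < r), LRS (R ⟨(i : ℕ) + 1, hi⟩) ≤ LRS (R i))
    (hblk : ∀ (i : Fin r) (j : Fin s), (j : ℕ) < (i : ℕ) →
      ∀ (p : Fin (∑ t, N t)) (b : Fin (N j)), R i p (blockIdx N j b) = 0)
    (hJdef : (J : Set (Matrix (Fin (∑ t, M t)) (Fin (∑ t, N t)) D)) =
      {A | ∀ i : Fin r, ∃ X : Matrix (Fin (M i)) (Fin (∑ t, N t)) D,
        blockRow M A i = X * R i})
    (k : Fin r) (hk : R k ≠ 0) (hk' : ∀ i : Fin r, (k : ℕ) < (i : ℕ) → R i = 0) :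
    (∃ A : Matrix (Fin (∑ t, M t)) (Fin (∑ t, N t)) D, IsNest M N A ∧
        (J : Set (Matrix (Fin (∑ t, M t)) (Fin (∑ t, N t)) D)) =
          {B | ∃ P : Matrix (Fin (∑ t, M t)) (Fin (∑ t, M t)) D,
            IsNest M M P ∧ B = P * A}) ↔
      ∀ i : Fin r, (i : ℕ) ≤ (k : ℕ) →
        Module.finrank D (LRS (R i)) -
            (if hi : (i : ℕ) + 1 < r then
              Module.finrank D (LRS (R ⟨(i : ℕ) + 1, hi⟩)) else 0) ≤ M i := by
  classical
  -- chain of row spaces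
  have hdesc' : ∀ (a : ℕ) (h1 : a < r) (h2 : a + 1 < r),
      LRS (R ⟨a + 1, h2⟩) ≤ LRS (R ⟨a, h1⟩) := by
    intro a h1 h2
    exact hdesc ⟨a, h1⟩ h2
  have hchain' : ∀ (d : ℕ) (i j : Fin r), (j : ℕ) = (i : ℕ) + d → LRS (R j) ≤ LRS (R i) := by
    intro d
    induction d with
    | zero =>
      intro i j hj
      have : j = i := Fin.ext (by omega)
      subst this
      exact le_rfl
    | succ d ih =>
      intro i j hj
      have hjr := j.2
      have hlt : (i : ℕ) + d < r := by omega
      have hlt2 : (i : ℕ) + d + 1 < r := by omega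
      have h2 := hdesc' ((i : ℕ) + d) hlt hlt2
      have hje : j = (⟨(i : ℕ) + d + 1, hlt2⟩ : Fin r) :=
        Fin.ext (show (j : ℕ) = (i : ℕ) + d + 1 by omega)
      rw [hje]
      exact le_trans h2 (ih i ⟨(i : ℕ) + d, hlt⟩ rfl)
  have hchain : ∀ (i j : Fin r), i ≤ j → LRS (R j) ≤ LRS (R i) := by
    intro i j hij
    exact hchain' ((j : ℕ) - (i : ℕ)) i j (by have := Fin.le_def.mp hij; omega)
  -- membership in J in terms of rows
  have memJ : ∀ B, B ∈ J ↔
      ∀ (i : Fin r) (a : Fin (M i)), B (blockIdx M i a) ∈ LRS (R i) := by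
    intro B
    rw [← SetLike.mem_coe, hJdef]
    simp only [Set.mem_setOf_eq]
    constructor
    · intro h i a
      obtain ⟨X, hX⟩ := h i
      have hrow : B (blockIdx M i a) = X a ᵥ* R i := by
        funext q
        have h2 := congrFun (congrFun hX a) q
        simpa [blockRow, Matrix.mul_apply, Matrix.vecMul, dotProduct] using h2
      rw [hrow]
      exact (mem_LRS_iff (R i) _).mpr ⟨X a, rfl⟩
    · intro h i
      have h' : ∀ a, ∃ c : Fin (∑ t, N t) → D, B (blockIdx M i a) = c ᵥ* R i :=
        fun a => (mem_LRS_iff (R i) _).mp (h i a)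
      choose c hc using h'
      refine ⟨Matrix.of c, ?_⟩
      funext a q
      have := congrFun (hc a) q
      simpa [blockRow, Matrix.mul_apply, Matrix.vecMul, dotProduct] using this
  -- nest condition for square matrices, in global terms
  have nestP : ∀ P : Matrix (Fin (∑ t, M t)) (Fin (∑ t, M t)) D,
      IsNest M M P ↔ ∀ (i : Fin r) (a : Fin (M i)) (p : Fin (∑ t, M t)),
        (p : ℕ) < blockStart M i → P (blockIdx M i a) p = 0 := by
    intro P
    constructor
    · intro h i a p hp
      obtain ⟨j, b, rfl⟩ := exists_blockIdx M p
      have hji : (j : ℕ) < (i : ℕ) := by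
        by_contra hcon
        push_neg at hcon
        have h1 : blockStart M i ≤ blockStart M j :=
          blockStart_mono M (Fin.le_def.mpr hcon)
        have : (blockIdx M j b : ℕ) = blockStart M j + (b : ℕ) := rfl
        omega
      exact h i j a b hji
    · intro h i j a b hji
      apply h
      have h1 : blockStart M j + M j ≤ blockStart M i :=
        blockStart_add_le M (Fin.lt_def.mpr hji)
      have h2 : (b : ℕ) < M j := b.2
      have : (blockIdx M j b : ℕ) = blockStart M j + (b : ℕ) := rfl
      omega
  -- the identity matrix is nest
  have nest1 : IsNest M M (1 : Matrix (Fin (∑ t, M t)) (Fin (∑ t, M t)) D) := by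
    intro i j a b hji
    apply Matrix.one_apply_ne
    intro hcon
    have h1 := blockIdx_lt M (Fin.lt_def.mpr hji) a b
    have h2 : (blockIdx M i a : ℕ) = (blockIdx M j b : ℕ) := by rw [hcon]
    omega
  -- vanishing of earlier block columns on row spaces
  have hvanish : ∀ (i : Fin r) (j : Fin s), (j : ℕ) < (i : ℕ) →
      ∀ v ∈ LRS (R i), ∀ b : Fin (N j), v (blockIdx N j b) = 0 := by
    intro i j hji v hv b
    obtain ⟨c, rfl⟩ := (mem_LRS_iff (R i) v).mp hv
    simp only [Matrix.vecMul, dotProduct]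
    apply Finset.sum_eq_zero
    intro p _
    rw [hblk i j hji p b, mul_zero]
  -- span of rows of a tail of blocks
  have hVle : ∀ (A : Matrix (Fin (∑ t, M t)) (Fin (∑ t, N t)) D),
      (∀ (i : Fin r) (a : Fin (M i)), A (blockIdx M i a) ∈ LRS (R i)) →
      ∀ i : Fin r,
        Submodule.span D (A '' {p | blockStart M i ≤ (p : ℕ)}) ≤ LRS (R i) := by
    intro A hrows i
    rw [Submodule.span_le]
    rintro _ ⟨p, hp, rfl⟩
    obtain ⟨j, b, rfl⟩ := exists_blockIdx M p
    have hij : i ≤ j := by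
      by_contra hcon
      push_neg at hcon
      have h1 : blockStart M j + M j ≤ blockStart M i := blockStart_add_le M hcon
      have h2 : (b : ℕ) < M j := b.2
      have h3 : (blockIdx M j b : ℕ) = blockStart M j + (b : ℕ) := rfl
      simp only [Set.mem_setOf_eq] at hp
      omega
    exact hchain i j hij (hrows j b)
  constructor
  · -- principal → rank condition
    rintro ⟨A, hAnest, hAset⟩ i hik
    have hA_J : A ∈ J := by
      rw [← SetLike.mem_coe, hAset]
      exact ⟨1, nest1, (Matrix.one_mul A).symm⟩
    have hrows := (memJ A).mp hA_J
    set V : Fin r → Submodule D (Fin (∑ t, N t) → D) :=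
      fun i => Submodule.span D (A '' {p | blockStart M i ≤ (p : ℕ)}) with hV
    have hVle' : ∀ i, V i ≤ LRS (R i) := fun i => hVle A hrows i
    have hleV : ∀ i, LRS (R i) ≤ V i := by
      intro i0
      rw [LRS, Submodule.span_le]
      rintro _ ⟨p, rfl⟩
      set B : Matrix (Fin (∑ t, M t)) (Fin (∑ t, N t)) D :=
        Matrix.of fun p0 q =>
          if blockStart M i0 ≤ (p0 : ℕ) ∧ (p0 : ℕ) < blockStart M i0 + M i0
          then R i0 p q else 0 with hB
      have hBrow : ∀ (j : Fin r) (a : Fin (M j)),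
          B (blockIdx M j a) = if j = i0 then R i0 p else 0 := by
        intro j a
        by_cases hji : j = i0
        · subst hji
          rw [if_pos rfl]
          funext q
          have hcond : blockStart M j ≤ (blockIdx M j a : ℕ) ∧
              (blockIdx M j a : ℕ) < blockStart M j + M j := by
            have h5 : (blockIdx M j a : ℕ) = blockStart M j + (a : ℕ) := rfl
            have := a.2
            omega
          simp only [hB, Matrix.of_apply, if_pos hcond]
        · rw [if_neg hji]
          funext q
          have hcond : ¬ (blockStart M i0 ≤ (blockIdx M j a : ℕ) ∧
              (blockIdx M j a : ℕ) < blockStart M i0 + M i0) := by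
            have hval : (blockIdx M j a : ℕ) = blockStart M j + (a : ℕ) := rfl
            have ha := a.2
            rcases Fin.lt_or_lt_of_ne hji with hlt | hlt
            · have := blockStart_add_le M hlt
              omega
            · have := blockStart_add_le M hlt
              omega
          simp only [hB, Matrix.of_apply, if_neg hcond]
          rfl
      have hB_J : B ∈ J := by
        rw [memJ]
        intro j a
        rw [hBrow j a]
        by_cases hji : j = i0
        · subst hji
          rw [if_pos rfl]
          exact Submodule.subset_span ⟨p, rfl⟩
        · rw [if_neg hji]
          exact Submodule.zero_mem _
      have : B ∈ (J : Set _) := hB_J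
      rw [hAset] at this
      obtain ⟨P, hPnest, hBPA⟩ := this
      set a0 : Fin (M i0) := ⟨0, hM i0⟩ with ha0
      have hrow0 : R i0 p = B (blockIdx M i0 a0) := by
        rw [hBrow i0 a0, if_pos rfl]
      rw [hrow0, hBPA, row_eq_sum_smul]
      apply Submodule.sum_mem
      intro p' _
      by_cases hp' : blockStart M i0 ≤ (p' : ℕ)
      · exact Submodule.smul_mem _ _ (Submodule.subset_span ⟨p', hp', rfl⟩)
      · rw [(nestP P).mp hPnest i0 a0 p' (by omega), zero_smul]
        exact Submodule.zero_mem _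
    have hVeq : ∀ i, V i = LRS (R i) := fun i => le_antisymm (hVle' i) (hleV i)
    -- dimension bound
    set U : Submodule D (Fin (∑ t, N t) → D) :=
      Submodule.span D (Set.range fun a : Fin (M i) => A (blockIdx M i a)) with hU
    have hUrank : Module.finrank D U ≤ M i := by
      have := finrank_range_le_card (R := D) (fun a : Fin (M i) => A (blockIdx M i a))
      simpa [Set.finrank] using this
    by_cases hi : (i : ℕ) + 1 < r
    · have hsplit : V i ≤ U ⊔ V ⟨(i : ℕ) + 1, hi⟩ := by
        rw [hV, Submodule.span_le]
        rintro _ ⟨p, hp, rfl⟩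
        simp only [Set.mem_setOf_eq] at hp
        by_cases hp2 : (p : ℕ) < blockStart M i + M i
        · apply Submodule.mem_sup_left
          have ha : (p : ℕ) - blockStart M i < M i := by omega
          have : p = blockIdx M i ⟨(p : ℕ) - blockStart M i, ha⟩ := by
            apply Fin.ext
            show (p : ℕ) = blockStart M i + ((p : ℕ) - blockStart M i)
            omega
          rw [this]
          exact Submodule.subset_span ⟨⟨(p : ℕ) - blockStart M i, ha⟩, rfl⟩
        · apply Submodule.mem_sup_right
          apply Submodule.subset_span
          refine ⟨p, ?_, rfl⟩
          show blockStart M ⟨(i : ℕ) + 1, hi⟩ ≤ (p : ℕ)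
          rw [blockStart_succ M i hi]
          omega
      have hle2 : Module.finrank D (V i) ≤
          Module.finrank D U + Module.finrank D (V ⟨(i : ℕ) + 1, hi⟩) := by
        calc Module.finrank D (V i)
            ≤ Module.finrank D ((U ⊔ V ⟨(i : ℕ) + 1, hi⟩ : Submodule D _)) :=
              Submodule.finrank_mono hsplit
          _ ≤ _ := Submodule.finrank_add_le_finrank_add_finrank _ _
      rw [hVeq i, hVeq ⟨(i : ℕ) + 1, hi⟩] at hle2
      rw [dif_pos hi]
      omega
    · have hsplit : V i ≤ U := by
        rw [hV, Submodule.span_le]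
        rintro _ ⟨p, hp, rfl⟩
        simp only [Set.mem_setOf_eq] at hp
        have hp2 : (p : ℕ) < blockStart M i + M i := by
          have := blockStart_last M i hi
          have := p.2
          omega
        have ha : (p : ℕ) - blockStart M i < M i := by omega
        have : p = blockIdx M i ⟨(p : ℕ) - blockStart M i, ha⟩ := by
          apply Fin.ext
          show (p : ℕ) = blockStart M i + ((p : ℕ) - blockStart M i)
          omega
        rw [this]
        exact Submodule.subset_span ⟨⟨(p : ℕ) - blockStart M i, ha⟩, rfl⟩
      have hle2 : Module.finrank D (V i) ≤ Module.finrank D U :=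
        Submodule.finrank_mono hsplit
      rw [hVeq i] at hle2
      rw [dif_neg hi]
      omega
  · -- rank condition → principal
    intro hcond
    -- the "next" row space
    set W : ℕ → Submodule D (Fin (∑ t, N t) → D) :=
      fun i => if h : i < r then LRS (R ⟨i, h⟩) else ⊥ with hW
    have hWpos : ∀ (a : ℕ) (h : a < r), W a = LRS (R ⟨a, h⟩) := fun a h => dif_pos h
    have hWneg : ∀ (a : ℕ), ¬ a < r → W a = ⊥ := fun a h => dif_neg h
    have hWle : ∀ i : Fin r, W ((i : ℕ) + 1) ≤ LRS (R i) := by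
      intro i
      by_cases h : (i : ℕ) + 1 < r
      · rw [hWpos _ h]
        exact hdesc i h
      · rw [hWneg _ h]
        exact bot_le
    have hWrank : ∀ i : Fin r, Module.finrank D (W ((i : ℕ) + 1)) =
        if hi : (i : ℕ) + 1 < r then
          Module.finrank D (LRS (R ⟨(i : ℕ) + 1, hi⟩)) else 0 := by
      intro i
      by_cases h : (i : ℕ) + 1 < r
      · rw [hWpos _ h, dif_pos h]
      · rw [hWneg _ h, dif_neg h, finrank_bot]
    obtain ⟨d, g, hd, hgmem, hgspan⟩ :
        ∃ (d : Fin r → ℕ) (g : ∀ i : Fin r, Fin (d i) → (Fin (∑ t, N t) → D)),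
          (∀ i : Fin r, d i = Module.finrank D (LRS (R i)) - Module.finrank D (W ((i : ℕ) + 1))) ∧
          (∀ (i : Fin r) (a : Fin (d i)), g i a ∈ LRS (R i)) ∧
          (∀ i : Fin r, W ((i : ℕ) + 1) ⊔ Submodule.span D (Set.range (g i)) = LRS (R i)) := by
      have h := fun i : Fin r => exists_complement_family (W ((i : ℕ) + 1)) (LRS (R i)) (hWle i)
      choose d g hd hgmem hgspan using h
      exact ⟨d, g, hd, hgmem, hgspan⟩
    have hLRSbot : ∀ i : Fin r, (k : ℕ) < (i : ℕ) → LRS (R i) = ⊥ := by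
      intro i hik
      rw [hk' i hik]
      apply le_bot_iff.mp
      rw [LRS, Submodule.span_le]
      rintro _ ⟨p, rfl⟩
      simp only [SetLike.mem_coe, Submodule.mem_bot]
      rfl
    have hdM : ∀ i, d i ≤ M i := by
      intro i
      by_cases hik : (i : ℕ) ≤ (k : ℕ)
      · have h1 := hcond i hik
        rw [hd i, hWrank i]
        exact h1
      · push_neg at hik
        rw [hd i, hLRSbot i hik]
        simp
    -- the bijection between sigma type and global indices
    have hbij : Function.Bijective
        (fun x : Σ i : Fin r, Fin (M i) => blockIdx M x.1 x.2) := by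
      constructor
      · rintro ⟨i, a⟩ ⟨j, b⟩ h
        have hval : blockStart M i + (a : ℕ) = blockStart M j + (b : ℕ) :=
          congrArg Fin.val h
        have hij : i = j := by
          by_contra hne
          rcases Fin.lt_or_lt_of_ne hne with hlt | hlt
          · have := blockStart_add_le M hlt
            have := a.2
            omega
          · have := blockStart_add_le M hlt
            have := b.2
            omega
        subst hij
        have : a = b := Fin.ext (by omega)
        rw [this]
      · intro q
        obtain ⟨i, a, rfl⟩ := exists_blockIdx M q
        exact ⟨⟨i, a⟩, rfl⟩
    set e : (Σ i : Fin r, Fin (M i)) ≃ Fin (∑ t, M t) :=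
      Equiv.ofBijective _ hbij with he
    have hesymm : ∀ (i : Fin r) (a : Fin (M i)), e.symm (blockIdx M i a) = ⟨i, a⟩ := by
      intro i a
      apply e.injective
      rw [Equiv.apply_symm_apply]
      rfl
    -- the generator
    set F : (Σ i : Fin r, Fin (M i)) → (Fin (∑ t, N t) → D) :=
      fun x => if h : (x.2 : ℕ) < d x.1 then g x.1 ⟨(x.2 : ℕ), h⟩ else 0 with hF
    set A : Matrix (Fin (∑ t, M t)) (Fin (∑ t, N t)) D :=
      Matrix.of fun p q => F (e.symm p) q with hA
    have hArow : ∀ (i : Fin r) (a : Fin (M i)),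
        A (blockIdx M i a) = if h : (a : ℕ) < d i then g i ⟨(a : ℕ), h⟩ else 0 := by
      intro i a
      funext q
      show F (e.symm (blockIdx M i a)) q = _
      rw [hesymm i a]
    have hrowsA : ∀ (i : Fin r) (a : Fin (M i)), A (blockIdx M i a) ∈ LRS (R i) := by
      intro i a
      rw [hArow i a]
      by_cases h : (a : ℕ) < d i
      · rw [dif_pos h]; exact hgmem i _
      · rw [dif_neg h]; exact Submodule.zero_mem _
    have hAnest : IsNest M N A := by
      intro i j a b hji
      exact hvanish i j hji _ (hrowsA i a) b
    -- the span of the tail blocks of A equals LRS (R i)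
    set V : Fin r → Submodule D (Fin (∑ t, N t) → D) :=
      fun i => Submodule.span D (A '' {p | blockStart M i ≤ (p : ℕ)}) with hV
    have hVle' : ∀ i, V i ≤ LRS (R i) := fun i => hVle A hrowsA i
    have hVmono : ∀ (i : Fin r) (hi : (i : ℕ) + 1 < r), V ⟨(i : ℕ) + 1, hi⟩ ≤ V i := by
      intro i hi
      apply Submodule.span_mono
      apply Set.image_mono
      intro p hp
      simp only [Set.mem_setOf_eq] at *
      rw [blockStart_succ M i hi] at hp
      omega
    have hleV : ∀ (t : ℕ) (i : Fin r), r - (i : ℕ) ≤ t → LRS (R i) ≤ V i := by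
      intro t
      induction t with
      | zero =>
        intro i hi
        have := i.2
        omega
      | succ t ih =>
        intro i hi
        rw [← hgspan i]
        apply sup_le
        · by_cases h1 : (i : ℕ) + 1 < r
          · rw [hWpos _ h1]
            refine le_trans (ih ⟨(i : ℕ) + 1, h1⟩ (by simp; omega)) (hVmono i h1)
          · rw [hWneg _ h1]
            exact bot_le
        · rw [Submodule.span_le]
          rintro _ ⟨a, rfl⟩
          have haM : (a : ℕ) < M i := lt_of_lt_of_le a.2 (hdM i)
          have hga : g i a = A (blockIdx M i ⟨(a : ℕ), haM⟩) := by
            rw [hArow]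
            rw [dif_pos (show ((⟨(a : ℕ), haM⟩ : Fin (M i)) : ℕ) < d i from a.2)]
          rw [hga]
          apply Submodule.subset_span
          refine ⟨blockIdx M i ⟨(a : ℕ), haM⟩, ?_, rfl⟩
          show blockStart M i ≤ blockStart M i + ((⟨(a : ℕ), haM⟩ : Fin (M i)) : ℕ)
          omega
    have hVeq : ∀ i, V i = LRS (R i) :=
      fun i => le_antisymm (hVle' i) (hleV r i (by omega))
    refine ⟨A, hAnest, ?_⟩
    ext B
    simp only [Set.mem_setOf_eq]
    constructor
    · intro hB
      have hB_J : B ∈ J := hB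
      have hBrows := (memJ B).mp hB_J
      have hBrow' : ∀ p0 : Fin (∑ t, M t),
          B p0 ∈ Submodule.span D (A '' {p | blockStart M ((e.symm p0).1) ≤ (p : ℕ)}) := by
        intro p0
        have hp0 : p0 = blockIdx M ((e.symm p0).1) ((e.symm p0).2) :=
          (e.apply_symm_apply p0).symm
        have := hBrows ((e.symm p0).1) ((e.symm p0).2)
        rw [← hp0] at this
        rw [show Submodule.span D (A '' {p | blockStart M ((e.symm p0).1) ≤ (p : ℕ)}) =
          V ((e.symm p0).1) from rfl, hVeq]
        exact this
      have hc := fun p0 => (mem_span_image_iff_coeffs A _ (B p0)).mp (hBrow' p0)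
      choose c hc0 hc1 using hc
      refine ⟨Matrix.of c, ?_, ?_⟩
      · rw [nestP]
        intro i a p hp
        show c (blockIdx M i a) p = 0
        apply hc0
        simp only [Set.mem_setOf_eq]
        rw [hesymm i a]
        show ¬ blockStart M i ≤ (p : ℕ)
        omega
      · funext p0 q
        show B p0 q = (Matrix.of c * A) p0 q
        rw [show ((Matrix.of c * A) p0 : Fin (∑ t, N t) → D) =
          ∑ p, Matrix.of c p0 p • A p from row_eq_sum_smul _ _ _]
        rw [hc1 p0]
        rfl
    · rintro ⟨P, hPnest, rfl⟩
      show P * A ∈ (J : Set _)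
      rw [SetLike.mem_coe, memJ]
      intro i a
      rw [row_eq_sum_smul]
      apply Submodule.sum_mem
      intro p _
      by_cases hp : blockStart M i ≤ (p : ℕ)
      · obtain ⟨j, b, rfl⟩ := exists_blockIdx M p
        have hij : i ≤ j := by
          by_contra hcon
          push_neg at hcon
          have h1 : blockStart M j + M j ≤ blockStart M i := blockStart_add_le M hcon
          have h2 : (b : ℕ) < M j := b.2
          have h3 : (blockIdx M j b : ℕ) = blockStart M j + (b : ℕ) := rfl
          omega
        exact Submodule.smul_mem _ _ (hchain i j hij (hrowsA j b))
      · rw [(nestP P).mp hPnest i a p (by omega), zero_smul]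
        exact Submodule.zero_mem _
end
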